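/- arXiv:1801.08595 — 6 statements merged into one kernel-verified Lean document; each statement's English description precedes it below -/
import Mathlib

section
/- Let Φ be an IFS on ℝ satisfying the open set condition, with self-similar set F. Then there exist m ∈ ℕ₀ and a subset Λ ⊆ Σ^m such that the set U_Λ = ⋃_{ω∈Σ*} φ_ω(⋃_{u∈Λ} φ_u(I)) is a strong and compatible feasible open set for Φ (i.e. U_Λ is a feasible open set with U_Λ ∩ F ≠ ∅ and ∂U_Λ ⊆ F). -/
open Set Filter MeasureTheory Metric Topology

/-- An iterated function system (IFS) on `ℝ`: a finite family of contracting
similarities `φ i` with similarity ratios `r i ∈ (0,1)`. -/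
structure IFS (N : ℕ) where
  φ : Fin N → ℝ → ℝ
  r : Fin N → ℝ
  r_pos : ∀ i, 0 < r i
  r_lt_one : ∀ i, r i < 1
  similar : ∀ i x y, |φ i x - φ i y| = r i * |x - y|

namespace IFS

variable {N : ℕ}

/-- The natural action `ΦA = ⋃ i φ i(A)` of an IFS on subsets of `ℝ`. -/
def map (Φ : IFS N) (A : Set ℝ) : Set ℝ := ⋃ i, Φ.φ i '' A

/-- A nonempty open set `O` is feasible for `Φ` if `φ i (O) ⊆ O` for all `i`
and the images `φ i (O)` are pairwise disjoint. -/
def Feasible (Φ : IFS N) (O : Set ℝ) : Prop :=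
  O.Nonempty ∧ IsOpen O ∧ (∀ i, Φ.φ i '' O ⊆ O) ∧
    ∀ i j, i ≠ j → Disjoint (Φ.φ i '' O) (Φ.φ j '' O)

/-- The open set condition: existence of a feasible open set. -/
def OSC (Φ : IFS N) : Prop := ∃ O : Set ℝ, Φ.Feasible O

/-- `F` is the self-similar set (attractor) of `Φ`: the (unique) nonempty
compact set with `ΦF = F`. -/
def IsAttractor (Φ : IFS N) (F : Set ℝ) : Prop :=
  F.Nonempty ∧ IsCompact F ∧ Φ.map F = F

/-- `Φ` is lattice if the additive subgroup of `ℝ` generated by the `log (r i)`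
is discrete, equivalently all `log (r i)` lie in `aℤ` for some `a > 0`. -/
def IsLattice (Φ : IFS N) : Prop :=
  ∃ a : ℝ, 0 < a ∧ ∀ i, ∃ k : ℤ, Real.log (Φ.r i) = k * a

/-- `ρ = e^{-a}` is the base of the lattice IFS `Φ`, where `a > 0` is maximal
with `log (r i) ∈ aℤ` for all `i`. -/
def IsLatticeBase (Φ : IFS N) (ρ : ℝ) : Prop :=
  ∃ a : ℝ, 0 < a ∧ ρ = Real.exp (-a) ∧
    (∀ i, ∃ k : ℤ, Real.log (Φ.r i) = k * a) ∧
    ∀ b : ℝ, 0 < b → (∀ i, ∃ k : ℤ, Real.log (Φ.r i) = k * b) → b ≤ a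

/-- For a finite word `ω = ω₁⋯ωₙ`, the composition `φ_ω = φ_{ω₁} ∘ ⋯ ∘ φ_{ωₙ}`
(the empty word giving the identity). -/
def wordMap (Φ : IFS N) (ω : List (Fin N)) : ℝ → ℝ :=
  ω.foldr (fun i f => Φ.φ i ∘ f) id

end IFS

/-- `y` is the unique nearest point of `x` in `F`. -/
def UniqueNearest (F : Set ℝ) (x y : ℝ) : Prop :=
  y ∈ F ∧ dist x y = Metric.infDist x F ∧
    ∀ z ∈ F, dist x z = Metric.infDist x F → z = y

/-- The projection condition for a feasible open set `O`:
`φ i (O) ⊆ closure (π_F⁻¹ (φ i (F)))` for all `i`, where `π_F` is the metric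
projection onto `F` (defined where the nearest point in `F` is unique). -/
def IFS.ProjCond {N : ℕ} (Φ : IFS N) (F O : Set ℝ) : Prop :=
  ∀ i, Φ.φ i '' O ⊆ closure {x : ℝ | ∃ y, UniqueNearest F x y ∧ y ∈ Φ.φ i '' F}

/-- `F` has Minkowski dimension `D`:
`1 - log λ(F_ε) / log ε → D` as `ε → 0+`. -/
def HasMinkowskiDim (F : Set ℝ) (D : ℝ) : Prop :=
  Filter.Tendsto
    (fun ε : ℝ => 1 - Real.log (volume (Metric.cthickening ε F)).toReal / Real.log ε)
    (𝓝[>] (0:ℝ)) (𝓝 D)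

/-- `F` (of Minkowski dimension `D`) is Minkowski measurable:
`ε^(D-1) λ(F_ε)` converges to a positive finite limit as `ε → 0+`. -/
def MinkowskiMeasurable (F : Set ℝ) (D : ℝ) : Prop :=
  ∃ M : ℝ, 0 < M ∧
    Filter.Tendsto (fun ε : ℝ => ε ^ (D - 1) * (volume (Metric.cthickening ε F)).toReal)
      (𝓝[>] (0:ℝ)) (𝓝 M)

/-- The set `U_Λ = ⋃_{ω ∈ Σ*} φ_ω (⋃_{u ∈ Λ} φ_u (I))`, where `I` is the
interior of the convex hull of `F`. -/
def IFS.ULambda {N : ℕ} (Φ : IFS N) (F : Set ℝ) (Λ : Set (List (Fin N))) : Set ℝ :=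
  ⋃ ω : List (Fin N),
    Φ.wordMap ω '' (⋃ u ∈ Λ, Φ.wordMap u '' interior (convexHull ℝ F))

namespace IFSProof
open Set

variable {N : ℕ}

abbrev Word (N : ℕ) := List (Fin N)

/-- product of contraction ratios along a word -/
def rw' (Φ : IFS N) (ω : Word N) : ℝ := (ω.map Φ.r).prod

@[simp] lemma rw'_nil (Φ : IFS N) : rw' Φ [] = 1 := rfl

@[simp] lemma rw'_cons (Φ : IFS N) (i : Fin N) (ω : Word N) :
    rw' Φ (i :: ω) = Φ.r i * rw' Φ ω := by simp [rw']

lemma rw'_append (Φ : IFS N) (a b : Word N) :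
    rw' Φ (a ++ b) = rw' Φ a * rw' Φ b := by simp [rw']

lemma rw'_pos (Φ : IFS N) (ω : Word N) : 0 < rw' Φ ω := by
  induction ω with
  | nil => norm_num
  | cons i ω ih => simpa using mul_pos (Φ.r_pos i) ih

lemma rw'_le_one (Φ : IFS N) (ω : Word N) : rw' Φ ω ≤ 1 := by
  induction ω with
  | nil => norm_num
  | cons i ω ih =>
      have h1 := (Φ.r_pos i)
      have h2 := (Φ.r_lt_one i)
      have := rw'_pos Φ ω
      simp only [rw'_cons]
      nlinarith

lemma rw'_getLast (Φ : IFS N) (ω : Word N) (h : ω ≠ []) :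
    rw' Φ ω = rw' Φ ω.dropLast * Φ.r (ω.getLast h) := by
  conv_lhs => rw [← List.dropLast_append_getLast h]
  rw [rw'_append]; simp [rw']

@[simp] lemma wordMap_nil (Φ : IFS N) : Φ.wordMap [] = id := rfl

lemma wordMap_cons (Φ : IFS N) (i : Fin N) (ω : Word N) :
    Φ.wordMap (i :: ω) = Φ.φ i ∘ Φ.wordMap ω := rfl

lemma wordMap_append (Φ : IFS N) (a b : Word N) :
    Φ.wordMap (a ++ b) = Φ.wordMap a ∘ Φ.wordMap b := by
  induction a with
  | nil => rfl
  | cons i a ih => simp only [List.cons_append, IFS.wordMap, List.foldr_cons] at *; rw [ih]; rfl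

lemma wordMap_dist (Φ : IFS N) (ω : Word N) (x y : ℝ) :
    |Φ.wordMap ω x - Φ.wordMap ω y| = rw' Φ ω * |x - y| := by
  induction ω with
  | nil => simp
  | cons i ω ih =>
      rw [wordMap_cons]
      simp only [Function.comp_apply, rw'_cons]
      rw [Φ.similar i, ih]; ring

lemma wordMap_inj (Φ : IFS N) (ω : Word N) : Function.Injective (Φ.wordMap ω) := by
  intro x y h
  have := wordMap_dist Φ ω x y
  rw [h] at this
  simp only [sub_self, abs_zero] at this
  have hp := rw'_pos Φ ω
  have : |x - y| = 0 := by
    rcases mul_eq_zero.1 this.symm with h' | h'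
    · exact absurd h' (ne_of_gt hp)
    · exact h'
  have := abs_eq_zero.1 this
  linarith [sub_eq_zero.1 this]

/-- a map scaling all distances by `r > 0` is affine -/
lemma affine_of_dist {f : ℝ → ℝ} {r : ℝ} (hr : 0 < r)
    (h : ∀ x y, |f x - f y| = r * |x - y|) :
    ∃ e : ℝ, |e| = r ∧ ∀ x, f x = f 0 + e * x := by
  refine ⟨f 1 - f 0, by simpa using h 1 0, fun x => ?_⟩
  set e := f 1 - f 0 with he
  set d := f x - f 0 with hd
  have h1 : |d| = r * |x| := by simpa using h x 0
  have h2 : |d - e| = r * |x - 1| := by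
    have : d - e = f x - f 1 := by rw [hd, he]; ring
    rw [this]; exact h x 1
  have he2 : e ^ 2 = r ^ 2 := by
    have : |e| ^ 2 = r ^ 2 := by rw [show |e| = r by simpa using h 1 0]
    simpa [sq_abs] using this
  have hd2 : d ^ 2 = r ^ 2 * x ^ 2 := by
    have : |d| ^ 2 = (r * |x|) ^ 2 := by rw [h1]
    simpa [sq_abs, mul_pow] using this
  have hde2 : (d - e) ^ 2 = r ^ 2 * (x - 1) ^ 2 := by
    have : |d - e| ^ 2 = (r * |x - 1|) ^ 2 := by rw [h2]
    simpa [sq_abs, mul_pow] using this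
  have hkey : e * d = r ^ 2 * x := by nlinarith
  have hene : e ≠ 0 := by
    intro h0; rw [h0] at he2; nlinarith
  have : e * d = e * (e * x) := by rw [hkey]; nlinarith [he2]
  have := mul_left_cancel₀ hene this
  rw [hd] at this; linarith

lemma wordMap_affine (Φ : IFS N) (ω : Word N) :
    ∃ e : ℝ, |e| = rw' Φ ω ∧ ∀ x, Φ.wordMap ω x = Φ.wordMap ω 0 + e * x :=
  affine_of_dist (rw'_pos Φ ω) (wordMap_dist Φ ω)

end IFSProof
namespace IFSProof
open Set

variable {N : ℕ}

lemma affine_isOpenMap (c e : ℝ) (he : e ≠ 0) : IsOpenMap (fun x : ℝ => c + e * x) := by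
  have : (fun x : ℝ => c + e * x) = (Homeomorph.addLeft c) ∘ (Homeomorph.mulLeft₀ e he) := by
    funext x; simp [Homeomorph.addLeft, Homeomorph.mulLeft₀]; rfl
  rw [this]
  exact (Homeomorph.addLeft c).isOpenMap.comp (Homeomorph.mulLeft₀ e he).isOpenMap

lemma wordMap_isOpenMap (Φ : IFS N) (ω : Word N) : IsOpenMap (Φ.wordMap ω) := by
  obtain ⟨e, he, hf⟩ := wordMap_affine Φ ω
  have hene : e ≠ 0 := by
    intro h0; rw [h0] at he; have := rw'_pos Φ ω; simp at he; linarith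
  have : Φ.wordMap ω = fun x => Φ.wordMap ω 0 + e * x := funext hf
  rw [this]; exact affine_isOpenMap _ _ hene

lemma affine_image_Ioo (c e : ℝ) (he : e ≠ 0) (a b : ℝ) (hab : a < b) :
    (fun x : ℝ => c + e * x) '' Ioo a b =
      Ioo (min (c + e * a) (c + e * b)) (max (c + e * a) (c + e * b)) := by
  rcases lt_or_gt_of_ne he with hneg | hpos
  · ext y
    constructor
    · rintro ⟨x, ⟨hx1, hx2⟩, rfl⟩
      constructor
      · have : c + e * b < c + e * x := by nlinarith
        calc min (c + e * a) (c + e * b) ≤ c + e * b := min_le_right _ _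
          _ < c + e * x := this
      · have : c + e * x < c + e * a := by nlinarith
        calc c + e * x < c + e * a := this
          _ ≤ max (c + e * a) (c + e * b) := le_max_left _ _
    · rintro ⟨h1, h2⟩
      have hmin : min (c + e * a) (c + e * b) = c + e * b := min_eq_right (by nlinarith)
      have hmax : max (c + e * a) (c + e * b) = c + e * a := max_eq_left (by nlinarith)
      rw [hmin] at h1; rw [hmax] at h2
      refine ⟨(y - c) / e, ⟨?_, ?_⟩, by field_simp; ring⟩
      · rw [lt_div_iff_of_neg hneg]; nlinarith
      · rw [div_lt_iff_of_neg hneg]; nlinarith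
  · ext y
    constructor
    · rintro ⟨x, ⟨hx1, hx2⟩, rfl⟩
      constructor
      · calc min (c + e * a) (c + e * b) ≤ c + e * a := min_le_left _ _
          _ < c + e * x := by nlinarith
      · calc c + e * x < c + e * b := by nlinarith
          _ ≤ max (c + e * a) (c + e * b) := le_max_right _ _
    · rintro ⟨h1, h2⟩
      have hmin : min (c + e * a) (c + e * b) = c + e * a := min_eq_left (by nlinarith)
      have hmax : max (c + e * a) (c + e * b) = c + e * b := max_eq_right (by nlinarith)
      rw [hmin] at h1; rw [hmax] at h2
      refine ⟨(y - c) / e, ⟨?_, ?_⟩, by field_simp; ring⟩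
      · rw [lt_div_iff₀ hpos]; nlinarith
      · rw [div_lt_iff₀ hpos]; nlinarith

/-- image of an open interval under a word map, described by endpoints -/
lemma wordMap_image_Ioo (Φ : IFS N) (ω : Word N) (a b : ℝ) (hab : a < b) :
    ∃ c d : ℝ, c < d ∧ c ∈ Φ.wordMap ω '' {a, b} ∧ d ∈ Φ.wordMap ω '' {a, b} ∧
      Φ.wordMap ω '' Ioo a b = Ioo c d := by
  obtain ⟨e, he, hf⟩ := wordMap_affine Φ ω
  have hene : e ≠ 0 := by
    intro h0; rw [h0] at he; have := rw'_pos Φ ω; simp at he; linarith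
  have hW : Φ.wordMap ω = fun x => Φ.wordMap ω 0 + e * x := funext hf
  have hne : Φ.wordMap ω a ≠ Φ.wordMap ω b := fun h => absurd (wordMap_inj Φ ω h) (ne_of_lt hab)
  refine ⟨min (Φ.wordMap ω a) (Φ.wordMap ω b), max (Φ.wordMap ω a) (Φ.wordMap ω b),
    min_lt_max.2 hne, ?_, ?_, ?_⟩
  · rcases min_choice (Φ.wordMap ω a) (Φ.wordMap ω b) with h | h <;> rw [h]
    · exact ⟨a, by simp, rfl⟩
    · exact ⟨b, by simp, rfl⟩
  · rcases max_choice (Φ.wordMap ω a) (Φ.wordMap ω b) with h | h <;> rw [h]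
    · exact ⟨a, by simp, rfl⟩
    · exact ⟨b, by simp, rfl⟩
  · have h2 : Φ.wordMap ω '' Ioo a b = (fun x : ℝ => Φ.wordMap ω 0 + e * x) '' Ioo a b :=
      Set.image_congr fun x _ => hf x
    rw [h2, affine_image_Ioo _ _ hene a b hab, ← hf a, ← hf b]

end IFSProof
namespace IFSProof
open Set

variable {N : ℕ} {Φ : IFS N} {F O : Set ℝ}

lemma phi_image_F (hF : Φ.IsAttractor F) (i : Fin N) : Φ.φ i '' F ⊆ F := by
  have h := hF.2.2
  rw [IFS.map] at h
  calc Φ.φ i '' F ⊆ ⋃ j, Φ.φ j '' F := Set.subset_iUnion (fun j => Φ.φ j '' F) i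
    _ = F := h

lemma wordMap_image_F (hF : Φ.IsAttractor F) (ω : Word N) : Φ.wordMap ω '' F ⊆ F := by
  induction ω with
  | nil => simp
  | cons i ω ih =>
      rw [wordMap_cons, Set.image_comp]
      exact (Set.image_mono ih).trans (phi_image_F hF i)

lemma wordMap_image_O (hO : Φ.Feasible O) (ω : Word N) : Φ.wordMap ω '' O ⊆ O := by
  induction ω with
  | nil => simp
  | cons i ω ih =>
      rw [wordMap_cons, Set.image_comp]
      exact (Set.image_mono ih).trans (hO.2.2.1 i)

section nondeg

variable (hN : 2 ≤ N) (hO : Φ.Feasible O) (hF : Φ.IsAttractor F)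

/-- the attractor is not a singleton -/
lemma attractor_nontrivial (hN : 2 ≤ N) (hO : Φ.Feasible O) (hF : Φ.IsAttractor F) :
    sInf F < sSup F := by
  obtain ⟨hne, hcpt, hmap⟩ := hF
  have hbdd : BddBelow F := hcpt.bddBelow
  have hbdd' : BddAbove F := hcpt.bddAbove
  have hle : sInf F ≤ sSup F := Real.sInf_le_sSup F hbdd hbdd'
  rcases lt_or_eq_of_le hle with h | h
  · exact h
  -- F = {p}
  exfalso
  set p := sInf F with hp
  have hsingle : F = {p} := by
    apply Set.eq_singleton_iff_nonempty_unique_mem.2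
    refine ⟨hne, fun x hx => ?_⟩
    have h1 := csInf_le hbdd hx
    have h2 := le_csSup hbdd' hx
    rw [← h] at h2
    linarith
  set i0 : Fin N := ⟨0, by omega⟩ with hi0
  set i1 : Fin N := ⟨1, by omega⟩ with hi1
  have hij : i0 ≠ i1 := by
    intro hc
    have : (0 : ℕ) = 1 := congrArg Fin.val hc
    omega
  have hfix : ∀ i : Fin N, Φ.φ i p = p := by
    intro i
    have : Φ.φ i p ∈ F := phi_image_F ⟨hne, hcpt, hmap⟩ i ⟨p, by rw [hsingle]; rfl, rfl⟩
    rw [hsingle] at this; exact this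
  -- affine forms
  have haff : ∀ i : Fin N, ∃ e : ℝ, ∀ x, Φ.φ i x = p + e * (x - p) := by
    intro i
    obtain ⟨e, _, hf⟩ := affine_of_dist (Φ.r_pos i) (Φ.similar i)
    refine ⟨e, fun x => ?_⟩
    have hp0 : Φ.φ i p = Φ.φ i 0 + e * p := hf p
    have := hfix i
    rw [hf x]; rw [hp0] at this; linarith
  obtain ⟨e0, he0⟩ := haff i0
  obtain ⟨e1, he1⟩ := haff i1
  obtain ⟨x0, hx0⟩ := hO.1
  -- z = φ0 φ0 φ1 φ1 x0 = φ1 φ1 φ0 φ0 x0 lies in both φ_{i0}(O) and φ_{i1}(O)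
  have hmem0 : Φ.φ i0 (Φ.φ i0 (Φ.φ i1 (Φ.φ i1 x0))) ∈ Φ.φ i0 '' O := by
    refine ⟨Φ.φ i0 (Φ.φ i1 (Φ.φ i1 x0)), ?_, rfl⟩
    exact hO.2.2.1 i0 ⟨_, hO.2.2.1 i1 ⟨_, hO.2.2.1 i1 ⟨_, hx0, rfl⟩, rfl⟩, rfl⟩
  have hmem1 : Φ.φ i1 (Φ.φ i1 (Φ.φ i0 (Φ.φ i0 x0))) ∈ Φ.φ i1 '' O := by
    refine ⟨Φ.φ i1 (Φ.φ i0 (Φ.φ i0 x0)), ?_, rfl⟩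
    exact hO.2.2.1 i1 ⟨_, hO.2.2.1 i0 ⟨_, hO.2.2.1 i0 ⟨_, hx0, rfl⟩, rfl⟩, rfl⟩
  have heq : Φ.φ i0 (Φ.φ i0 (Φ.φ i1 (Φ.φ i1 x0))) = Φ.φ i1 (Φ.φ i1 (Φ.φ i0 (Φ.φ i0 x0))) := by
    simp only [he0, he1]; ring
  rw [heq] at hmem0
  exact Set.disjoint_left.1 (hO.2.2.2 i0 i1 hij) (heq ▸ hmem0) hmem1

end nondeg

end IFSProof
namespace IFSProof
open Set

variable {N : ℕ} {Φ : IFS N} {F O : Set ℝ}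

lemma F_subset_Icc (hF : Φ.IsAttractor F) : F ⊆ Icc (sInf F) (sSup F) := fun x hx =>
  ⟨csInf_le hF.2.1.bddBelow hx, le_csSup hF.2.1.bddAbove hx⟩

lemma sInf_mem_F (hF : Φ.IsAttractor F) : sInf F ∈ F := hF.2.1.sInf_mem hF.1

lemma sSup_mem_F (hF : Φ.IsAttractor F) : sSup F ∈ F := hF.2.1.sSup_mem hF.1

lemma hull_eq_Icc (hF : Φ.IsAttractor F) : convexHull ℝ F = Icc (sInf F) (sSup F) := by
  apply le_antisymm
  · exact convexHull_min (F_subset_Icc hF) (convex_Icc _ _)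
  · have hseg : Icc (sInf F) (sSup F) = segment ℝ (sInf F) (sSup F) :=
      (segment_eq_Icc (Real.sInf_le_sSup F hF.2.1.bddBelow hF.2.1.bddAbove)).symm
    rw [hseg]
    exact (convex_convexHull ℝ F).segment_subset
      (subset_convexHull ℝ F (sInf_mem_F hF)) (subset_convexHull ℝ F (sSup_mem_F hF))

lemma interior_hull (hN : 2 ≤ N) (hO : Φ.Feasible O) (hF : Φ.IsAttractor F) :
    interior (convexHull ℝ F) = Ioo (sInf F) (sSup F) := by
  rw [hull_eq_Icc hF, interior_Icc]

/-- F has a point strictly between its endpoints -/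
lemma exists_middle (hN : 2 ≤ N) (hO : Φ.Feasible O) (hF : Φ.IsAttractor F) :
    ∃ z ∈ F, sInf F < z ∧ z < sSup F := by
  by_contra hc
  push_neg at hc
  set a := sInf F
  set b := sSup F
  have hab : a < b := attractor_nontrivial hN hO hF
  have hsub : F = {a, b} := by
    apply Set.Subset.antisymm
    · intro x hx
      rcases eq_or_lt_of_le (csInf_le hF.2.1.bddBelow hx) with h | h
      · exact Or.inl h.symm
      · rcases eq_or_lt_of_le (le_csSup hF.2.1.bddAbove hx) with h' | h'
        · exact Or.inr h'
        · exact absurd h' (not_lt.2 (hc x hx h))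
    · rintro x (rfl | rfl)
      exacts [sInf_mem_F hF, sSup_mem_F hF]
  set i0 : Fin N := ⟨0, by omega⟩
  have ha' : Φ.φ i0 a ∈ ({a, b} : Set ℝ) := hsub ▸ phi_image_F hF i0 ⟨a, hsub ▸ (by simp), rfl⟩
  have hb' : Φ.φ i0 b ∈ ({a, b} : Set ℝ) := hsub ▸ phi_image_F hF i0 ⟨b, hsub ▸ (by simp), rfl⟩
  have hdist : |Φ.φ i0 a - Φ.φ i0 b| = Φ.r i0 * (b - a) := by
    rw [Φ.similar i0, abs_of_neg (by linarith : a - b < 0)]; ring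
  have hne : Φ.φ i0 a ≠ Φ.φ i0 b := by
    intro h
    rw [h] at hdist
    simp only [sub_self, abs_zero] at hdist
    nlinarith [Φ.r_pos i0]
  have hr1 := Φ.r_lt_one i0
  have hr0 := Φ.r_pos i0
  rcases ha' with h1 | h1 <;> rcases hb' with h2 | h2 <;> rw [h1, h2] at hdist hne
  · exact hne rfl
  · rw [abs_of_neg (by linarith : a - b < 0)] at hdist; nlinarith
  · rw [abs_of_pos (by linarith : 0 < b - a)] at hdist; nlinarith
  · exact hne rfl

/-- word maps send the open hull interval into itself -/
lemma wordMap_image_Ioo_subset (hF : Φ.IsAttractor F) (ω : Word N)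
    (hab : sInf F < sSup F) :
    Φ.wordMap ω '' Ioo (sInf F) (sSup F) ⊆ Ioo (sInf F) (sSup F) := by
  obtain ⟨c, d, hcd, hc, hd, him⟩ := wordMap_image_Ioo Φ ω _ _ hab
  rw [him]
  have hcF : c ∈ F := by
    rcases hc with ⟨x, hx, rfl⟩
    apply wordMap_image_F hF ω
    rcases hx with rfl | hx
    · exact ⟨_, sInf_mem_F hF, rfl⟩
    · simp at hx; rw [hx]; exact ⟨_, sSup_mem_F hF, rfl⟩
  have hdF : d ∈ F := by
    rcases hd with ⟨x, hx, rfl⟩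
    apply wordMap_image_F hF ω
    rcases hx with rfl | hx
    · exact ⟨_, sInf_mem_F hF, rfl⟩
    · simp at hx; rw [hx]; exact ⟨_, sSup_mem_F hF, rfl⟩
  intro x hx
  obtain ⟨hc1, hc2⟩ := F_subset_Icc hF hcF
  obtain ⟨hd1, hd2⟩ := F_subset_Icc hF hdF
  exact ⟨lt_of_le_of_lt hc1 hx.1, lt_of_lt_of_le hx.2 hd2⟩

end IFSProof
namespace IFSProof
open Set

variable {N : ℕ} {Φ : IFS N} {F O : Set ℝ}

lemma incomp_decomp : ∀ σ τ : Word N, ¬ σ <+: τ → ¬ τ <+: σ →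
    ∃ (c : Word N) (i j : Fin N) (α β : Word N),
      i ≠ j ∧ σ = c ++ i :: α ∧ τ = c ++ j :: β := by
  intro σ
  induction σ with
  | nil => intro τ h1 _; exact absurd (List.nil_prefix) h1
  | cons i σ' ih =>
      intro τ h1 h2
      match τ with
      | [] => exact absurd (List.nil_prefix) h2
      | j :: τ' =>
          by_cases hij : i = j
          · subst hij
            have h1' : ¬ σ' <+: τ' := fun h => h1 (List.cons_prefix_cons.2 ⟨rfl, h⟩)
            have h2' : ¬ τ' <+: σ' := fun h => h2 (List.cons_prefix_cons.2 ⟨rfl, h⟩)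
            obtain ⟨c, a, b, α, β, hab, hσ, hτ⟩ := ih τ' h1' h2'
            exact ⟨i :: c, a, b, α, β, hab, by rw [hσ]; rfl, by rw [hτ]; rfl⟩
          · exact ⟨[], i, j, σ', τ', hij, rfl, rfl⟩

/-- images of O under incomparable words are disjoint -/
lemma disjoint_incomp (hO : Φ.Feasible O) (σ τ : Word N)
    (h1 : ¬ σ <+: τ) (h2 : ¬ τ <+: σ) :
    Disjoint (Φ.wordMap σ '' O) (Φ.wordMap τ '' O) := by
  obtain ⟨c, i, j, α, β, hij, rfl, rfl⟩ := incomp_decomp σ τ h1 h2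
  rw [wordMap_append, wordMap_append, Set.image_comp, Set.image_comp]
  apply Set.disjoint_image_of_injective (wordMap_inj Φ c)
  have hsub1 : Φ.wordMap (i :: α) '' O ⊆ Φ.φ i '' O := by
    rw [wordMap_cons, Set.image_comp]
    exact Set.image_mono (wordMap_image_O hO α)
  have hsub2 : Φ.wordMap (j :: β) '' O ⊆ Φ.φ j '' O := by
    rw [wordMap_cons, Set.image_comp]
    exact Set.image_mono (wordMap_image_O hO β)
  exact Set.disjoint_of_subset hsub1 hsub2 (hO.2.2.2 i j hij)

/-- `σ` belongs to the `ρ`-section -/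
def Sec (Φ : IFS N) (ρ : ℝ) (σ : Word N) : Prop :=
  σ ≠ [] ∧ rw' Φ σ ≤ ρ ∧ ρ < rw' Φ σ.dropLast

lemma rw'_prefix_le (Φ : IFS N) {σ τ : Word N} (h : σ <+: τ) : rw' Φ τ ≤ rw' Φ σ := by
  obtain ⟨t, rfl⟩ := h
  rw [rw'_append]
  nlinarith [rw'_pos Φ σ, rw'_pos Φ t, rw'_le_one Φ t]

lemma sec_not_prefix {ρ : ℝ} {σ τ : Word N} (hσ : Sec Φ ρ σ) (hτ : Sec Φ ρ τ)
    (hne : σ ≠ τ) : ¬ σ <+: τ := by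
  intro hp
  have hlt : σ.length < τ.length := by
    rcases lt_or_eq_of_le hp.length_le with h | h
    · exact h
    · exact absurd (List.IsPrefix.eq_of_length hp h) hne
  have hpre : σ <+: τ.dropLast := by
    obtain ⟨t, rfl⟩ := hp
    have ht : t ≠ [] := by
      intro h; subst h; simp at hlt
    rw [List.dropLast_append_of_ne_nil ht]
    exact ⟨t.dropLast, rfl⟩
  have := rw'_prefix_le Φ hpre
  have h1 := hσ.2.1
  have h2 := hτ.2.2
  linarith

lemma sec_disjoint (hO : Φ.Feasible O) {ρ : ℝ} {σ τ : Word N}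
    (hσ : Sec Φ ρ σ) (hτ : Sec Φ ρ τ) (hne : σ ≠ τ) :
    Disjoint (Φ.wordMap σ '' O) (Φ.wordMap τ '' O) :=
  disjoint_incomp hO σ τ (sec_not_prefix hσ hτ hne) (sec_not_prefix hτ hσ hne.symm)

lemma rw'_dropLast_gt (Φ : IFS N) (σ : Word N) (h : σ ≠ []) :
    rw' Φ σ < rw' Φ σ.dropLast := by
  rw [rw'_getLast Φ σ h]
  nlinarith [rw'_pos Φ σ.dropLast, Φ.r_pos (σ.getLast h), Φ.r_lt_one (σ.getLast h)]

/-- every word with small ratio has a prefix in the `ρ`-section -/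
lemma exists_sec_prefix_aux (Φ : IFS N) {ρ : ℝ} (hρ1 : ρ < 1) :
    ∀ (n : ℕ) (c : Word N), c.length ≤ n → c ≠ [] → rw' Φ c ≤ ρ →
      ∃ σ, σ <+: c ∧ Sec Φ ρ σ := by
  intro n
  induction n with
  | zero =>
      intro c hl hc _
      rw [Nat.le_zero, List.length_eq_zero_iff] at hl
      exact absurd hl hc
  | succ n ih =>
      intro c hl hc hrc
      by_cases hd : ρ < rw' Φ c.dropLast
      · exact ⟨c, List.prefix_refl c, hc, hrc, hd⟩
      · push_neg at hd
        have hdne : c.dropLast ≠ [] := by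
          intro h; rw [h] at hd; simp at hd; linarith
        have hlen : c.dropLast.length ≤ n := by
          rw [List.length_dropLast]; omega
        obtain ⟨σ, hσp, hσs⟩ := ih c.dropLast hlen hdne hd
        exact ⟨σ, hσp.trans (List.dropLast_prefix c), hσs⟩

lemma exists_sec_prefix (Φ : IFS N) {ρ : ℝ} (hρ1 : ρ < 1) (c : Word N)
    (hc : c ≠ []) (hrc : rw' Φ c ≤ ρ) : ∃ σ, σ <+: c ∧ Sec Φ ρ σ :=
  exists_sec_prefix_aux Φ hρ1 c.length c le_rfl hc hrc

/-- section words have ratio bounded below -/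
lemma sec_rw_lower (Φ : IFS N) {ρ : ℝ} {σ : Word N} (hσ : Sec Φ ρ σ) (rmin : ℝ)
    (hρ : 0 < ρ) (hrmin0 : 0 < rmin) (hrmin : ∀ i, rmin ≤ Φ.r i) : ρ * rmin < rw' Φ σ := by
  obtain ⟨hne, h1, h2⟩ := hσ
  rw [rw'_getLast Φ σ hne]
  have := hrmin (σ.getLast hne)
  have h0 : 0 < rw' Φ σ.dropLast := rw'_pos Φ _
  have hrm0 : 0 < Φ.r (σ.getLast hne) := Φ.r_pos _
  nlinarith

end IFSProof
namespace IFSProof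
open Set MeasureTheory
open scoped ENNReal

variable {N : ℕ} {Φ : IFS N} {F O : Set ℝ}

/-- the neighbour set of a word `τ`: section words whose copy of `F` comes
within `rw' τ` of the copy of `F` indexed by `τ` -/
def Gam (Φ : IFS N) (F : Set ℝ) (τ : Word N) : Set (Word N) :=
  {σ | Sec Φ (rw' Φ τ) σ ∧
    ∃ p ∈ Φ.wordMap σ '' F, ∃ q ∈ Φ.wordMap τ '' F, |p - q| ≤ rw' Φ τ}

lemma interval_len {σ : Word N} {α β c d : ℝ} (hαβ : α < β) (hcd : c < d)
    (hc : c ∈ Φ.wordMap σ '' {α, β}) (hd : d ∈ Φ.wordMap σ '' {α, β}) :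
    d - c = rw' Φ σ * (β - α) := by
  rcases hc with ⟨x, hx, rfl⟩
  rcases hd with ⟨y, hy, rfl⟩
  have hxy : x ≠ y := by rintro rfl; exact absurd rfl (ne_of_lt hcd)
  have hdist := wordMap_dist Φ σ y x
  have : |y - x| = β - α := by
    rcases hx with rfl | hx <;> rcases hy with rfl | hy <;>
      first
      | (exact absurd rfl hxy)
      | skip
    · simp at hy; rw [hy, abs_of_pos (by linarith)]
    · simp at hx; rw [hx, abs_of_neg (by linarith)]; ring
    · simp at hx hy; rw [hx, hy] at hxy; exact absurd rfl hxy
  rw [this] at hdist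
  rw [← hdist, abs_of_pos (by linarith)]

lemma Gam_finite_card (hN : 2 ≤ N) (hO : Φ.Feasible O) (hF : Φ.IsAttractor F) :
    ∃ M : ℕ, ∀ τ : Word N, (Gam Φ F τ).Finite ∧ (Gam Φ F τ).ncard ≤ M := by
  classical
  haveI : Nonempty (Fin N) := ⟨⟨0, by omega⟩⟩
  -- minimal ratio
  obtain ⟨imin, himin⟩ := Finset.exists_mem_eq_inf' (Finset.univ_nonempty (α := Fin N)) Φ.r
  set rmin := Finset.univ.inf' Finset.univ_nonempty Φ.r with hrmdef
  have hrmin0 : 0 < rmin := by rw [himin.2]; exact Φ.r_pos imin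
  have hrminle : ∀ i, rmin ≤ Φ.r i := fun i => Finset.inf'_le Φ.r (Finset.mem_univ i)
  -- an interval inside O
  obtain ⟨x₀, hx₀⟩ := hO.1
  obtain ⟨δ, hδ0, hball⟩ := Metric.isOpen_iff.1 hO.2.1 x₀ hx₀
  set α := x₀ - δ with hα
  set β := x₀ + δ with hβ
  have hαβ : α < β := by rw [hα, hβ]; linarith
  have hIooO : Ioo α β ⊆ O := by
    rw [hα, hβ, ← Real.ball_eq_Ioo]; exact hball
  -- global bound R
  obtain ⟨R0, hR0⟩ := hF.2.1.isBounded.subset_ball 0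
  set R := max R0 (|x₀| + δ) + 1 with hRdef
  have hRF : ∀ y ∈ F, |y| ≤ R := by
    intro y hy
    have := hR0 hy
    rw [Metric.mem_ball, Real.dist_eq, sub_zero] at this
    have : |y| ≤ R0 := le_of_lt this
    have h1 : R0 ≤ R := by rw [hRdef]; have := le_max_left R0 (|x₀| + δ); linarith
    linarith
  have hRO : ∀ y ∈ Ioo α β, |y| ≤ R := by
    intro y hy
    have h1 : |y| ≤ |x₀| + δ := by
      obtain ⟨h2, h3⟩ := hy
      rw [hα] at h2; rw [hβ] at h3
      have n1 := neg_abs_le x₀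
      have n2 := le_abs_self x₀
      rw [abs_le]
      constructor <;> linarith
    have h2 : |x₀| + δ ≤ R := by
      rw [hRdef]; have := le_max_right R0 (|x₀| + δ); linarith
    linarith
  have hR0' : 0 < R := by
    rw [hRdef]
    have h := le_max_right R0 (|x₀| + δ)
    have := abs_nonneg x₀
    linarith
  set C : ℝ := 4 * R + 1 with hC
  set Creal : ℝ := 2 * C / (rmin * (β - α)) with hCreal
  refine ⟨⌈Creal⌉₊, fun τ => ?_⟩
  set ρ := rw' Φ τ with hρdef
  have hρ0 : 0 < ρ := rw'_pos Φ τ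
  -- image intervals
  have himg : ∀ σ : Word N, ∃ c d : ℝ, c < d ∧ c ∈ Φ.wordMap σ '' {α, β} ∧
      d ∈ Φ.wordMap σ '' {α, β} ∧ Φ.wordMap σ '' Ioo α β = Ioo c d := by
    intro σ
    obtain ⟨c, d, h1, h2, h3, h4⟩ := wordMap_image_Ioo Φ σ α β hαβ
    exact ⟨c, d, h1, h2, h3, h4⟩
  choose cf df hcd hcmem hdmem heq using himg
  -- the key finset bound
  have hfinset : ∀ S : Finset (Word N), ↑S ⊆ Gam Φ F τ → (S.card : ℝ) ≤ Creal := by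
    intro S hS
    -- pairwise disjoint intervals
    have hpd : (↑S : Set (Word N)).PairwiseDisjoint (fun σ => Ioo (cf σ) (df σ)) := by
      intro σ hσ τ' hτ' hne
      have h1 := (hS hσ).1
      have h2 := (hS hτ').1
      have hd := sec_disjoint hO h1 h2 hne
      have hsub : ∀ υ : Word N, Ioo (cf υ) (df υ) ⊆ Φ.wordMap υ '' O := by
        intro υ
        rw [← heq υ]
        exact Set.image_mono hIooO
      exact Set.disjoint_of_subset (hsub σ) (hsub τ') hd
    -- all intervals inside a common interval
    have hloc : ∀ σ ∈ S, Ioo (cf σ) (df σ) ⊆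
        Icc (Φ.wordMap τ (sInf F) - C * ρ) (Φ.wordMap τ (sInf F) + C * ρ) := by
      intro σ hσ
      obtain ⟨⟨hσne, hσ1, hσ2⟩, p, ⟨p', hp'F, hp'⟩, q, ⟨q', hq'F, hq'⟩, hpq⟩ := hS hσ
      intro y hy
      rw [← heq σ] at hy
      obtain ⟨z, hz, rfl⟩ := hy
      have h1 : |Φ.wordMap σ z - p| ≤ ρ * (2 * R) := by
        rw [← hp', wordMap_dist Φ σ]
        have hz' : |z| ≤ R := hRO z hz
        have hp'' : |p'| ≤ R := hRF p' hp'F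
        have habs : |z - p'| ≤ 2 * R := by
          cases abs_cases z with
          | inl h => cases abs_cases p' with
            | inl h' => rw [abs_le]; constructor <;> linarith
            | inr h' => rw [abs_le]; constructor <;> linarith
          | inr h => cases abs_cases p' with
            | inl h' => rw [abs_le]; constructor <;> linarith
            | inr h' => rw [abs_le]; constructor <;> linarith
        have hσρ : rw' Φ σ ≤ ρ := hσ1
        have h0 : 0 < rw' Φ σ := rw'_pos Φ σ
        nlinarith [abs_nonneg (z - p')]
      have h2 : |q - Φ.wordMap τ (sInf F)| ≤ ρ * (2 * R) := by
        rw [← hq', wordMap_dist Φ τ]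
        have h3 : |q'| ≤ R := hRF q' hq'F
        have h4 : |sInf F| ≤ R := hRF _ (sInf_mem_F hF)
        have habs : |q' - sInf F| ≤ 2 * R := by
          cases abs_cases q' with
          | inl h => cases abs_cases (sInf F) with
            | inl h' => rw [abs_le]; constructor <;> linarith
            | inr h' => rw [abs_le]; constructor <;> linarith
          | inr h => cases abs_cases (sInf F) with
            | inl h' => rw [abs_le]; constructor <;> linarith
            | inr h' => rw [abs_le]; constructor <;> linarith
        rw [← hρdef]
        nlinarith [abs_nonneg (q' - sInf F)]
      have htot : |Φ.wordMap σ z - Φ.wordMap τ (sInf F)| ≤ C * ρ := by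
        have : |Φ.wordMap σ z - Φ.wordMap τ (sInf F)| ≤
            |Φ.wordMap σ z - p| + |p - q| + |q - Φ.wordMap τ (sInf F)| := by
          have t1 := abs_sub_le (Φ.wordMap σ z) p (Φ.wordMap τ (sInf F))
          have t2 := abs_sub_le p q (Φ.wordMap τ (sInf F))
          linarith
        rw [hC]
        have hpqρ : |p - q| ≤ ρ := hpq
        nlinarith
      rw [abs_le] at htot
      constructor <;> linarith [htot.1, htot.2]
    -- measure comparison
    have hmeas : ∑ σ ∈ S, volume (Ioo (cf σ) (df σ)) =
        volume (⋃ σ ∈ S, Ioo (cf σ) (df σ)) :=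
      (measure_biUnion_finset (μ := volume) hpd (fun σ _ => measurableSet_Ioo)).symm
    have hvol_le : volume (⋃ σ ∈ S, Ioo (cf σ) (df σ)) ≤ ENNReal.ofReal (2 * C * ρ) := by
      calc volume (⋃ σ ∈ S, Ioo (cf σ) (df σ))
          ≤ volume (Icc (Φ.wordMap τ (sInf F) - C * ρ) (Φ.wordMap τ (sInf F) + C * ρ)) :=
            measure_mono (Set.iUnion₂_subset hloc)
        _ = ENNReal.ofReal (2 * C * ρ) := by rw [Real.volume_Icc]; ring_nf
    have hvol_ge : ∀ σ ∈ S, ENNReal.ofReal (ρ * rmin * (β - α)) ≤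
        volume (Ioo (cf σ) (df σ)) := by
      intro σ hσ
      rw [Real.volume_Ioo]
      apply ENNReal.ofReal_le_ofReal
      have hlen : df σ - cf σ = rw' Φ σ * (β - α) :=
        interval_len hαβ (hcd σ) (hcmem σ) (hdmem σ)
      rw [hlen]
      have := sec_rw_lower Φ (hS hσ).1 rmin hρ0 hrmin0 hrminle
      nlinarith
    have hsum_ge : (S.card : ℝ≥0∞) * ENNReal.ofReal (ρ * rmin * (β - α)) ≤
        ∑ σ ∈ S, volume (Ioo (cf σ) (df σ)) := by
      calc (S.card : ℝ≥0∞) * ENNReal.ofReal (ρ * rmin * (β - α))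
          = S.card • ENNReal.ofReal (ρ * rmin * (β - α)) := by rw [nsmul_eq_mul]
        _ ≤ ∑ σ ∈ S, volume (Ioo (cf σ) (df σ)) := Finset.card_nsmul_le_sum S _ _ hvol_ge
    have hEN : ENNReal.ofReal ((S.card : ℝ) * (ρ * rmin * (β - α))) ≤
        ENNReal.ofReal (2 * C * ρ) := by
      rw [ENNReal.ofReal_mul (by positivity), ENNReal.ofReal_natCast]
      calc (S.card : ℝ≥0∞) * ENNReal.ofReal (ρ * rmin * (β - α))
          ≤ ∑ σ ∈ S, volume (Ioo (cf σ) (df σ)) := hsum_ge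
        _ = volume (⋃ σ ∈ S, Ioo (cf σ) (df σ)) := hmeas
        _ ≤ ENNReal.ofReal (2 * C * ρ) := hvol_le
    have hreal : (S.card : ℝ) * (ρ * rmin * (β - α)) ≤ 2 * C * ρ := by
      have h2C : (0:ℝ) ≤ 2 * C * ρ := by positivity
      exact (ENNReal.ofReal_le_ofReal_iff h2C).1 hEN
    rw [hCreal]
    rw [le_div_iff₀ (mul_pos hrmin0 (by linarith : (0:ℝ) < β - α))]
    nlinarith [hρ0]
  -- finiteness
  have hfin : (Gam Φ F τ).Finite := by
    by_contra hinf
    have hinf' : (Gam Φ F τ).Infinite := hinf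
    obtain ⟨T, hT, hTcard⟩ := hinf'.exists_subset_card_eq (⌈Creal⌉₊ + 1)
    have := hfinset T hT
    rw [hTcard] at this
    have h1 : Creal ≤ (⌈Creal⌉₊ : ℝ) := Nat.le_ceil Creal
    push_cast at this
    linarith
  refine ⟨hfin, ?_⟩
  have hcard := hfinset hfin.toFinset (by rw [Set.Finite.coe_toFinset])
  rw [Set.ncard_eq_toFinset_card _ hfin]
  have h1 : Creal ≤ (⌈Creal⌉₊ : ℝ) := Nat.le_ceil Creal
  exact_mod_cast hcard.trans h1

end IFSProof
namespace IFSProof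
open Set

variable {N : ℕ} {Φ : IFS N} {F O : Set ℝ}

lemma Gam_self (hF : Φ.IsAttractor F) (τ : Word N) (hτ : τ ≠ []) : τ ∈ Gam Φ F τ := by
  obtain ⟨f₀, hf₀⟩ := hF.1
  refine ⟨⟨hτ, le_refl _, rw'_dropLast_gt Φ τ hτ⟩, Φ.wordMap τ f₀, ⟨f₀, hf₀, rfl⟩,
    Φ.wordMap τ f₀, ⟨f₀, hf₀, rfl⟩, ?_⟩
  simp only [sub_self, abs_zero]
  exact le_of_lt (rw'_pos Φ τ)

lemma Gam_shift (w τ : Word N) :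
    (fun σ => w ++ σ) '' Gam Φ F τ ⊆ Gam Φ F (w ++ τ) := by
  rintro _ ⟨σ, ⟨⟨hσne, hσ1, hσ2⟩, p, hp, q, hq, hpq⟩, rfl⟩
  refine ⟨⟨?_, ?_, ?_⟩, Φ.wordMap w p, ?_, Φ.wordMap w q, ?_, ?_⟩
  · simp [hσne]
  · rw [rw'_append, rw'_append]
    have := rw'_pos Φ w
    nlinarith
  · rw [List.dropLast_append_of_ne_nil hσne, rw'_append, rw'_append]
    have := rw'_pos Φ w
    nlinarith
  · rw [wordMap_append, Set.image_comp]
    exact Set.mem_image_of_mem _ hp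
  · rw [wordMap_append, Set.image_comp]
    exact Set.mem_image_of_mem _ hq
  · rw [wordMap_dist Φ w, rw'_append]
    have := rw'_pos Φ w
    nlinarith

lemma exists_taustar (hN : 2 ≤ N) (hO : Φ.Feasible O) (hF : Φ.IsAttractor F) :
    ∃ τs : Word N, τs ≠ [] ∧
      ∀ w : Word N, Gam Φ F (w ++ τs) = (fun σ => w ++ σ) '' Gam Φ F τs := by
  classical
  obtain ⟨M, hM⟩ := Gam_finite_card hN hO hF
  set VS : Set ℕ := {n | ∃ τ : Word N, τ ≠ [] ∧ (Gam Φ F τ).ncard = n} with hVS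
  have hne : VS.Nonempty := ⟨_, ⟨[⟨0, by omega⟩], by simp, rfl⟩⟩
  have hbdd : BddAbove VS := by
    refine ⟨M, fun n hn => ?_⟩
    obtain ⟨τ, _, rfl⟩ := hn
    exact (hM τ).2
  obtain ⟨τs, hτsne, hτscard⟩ := Nat.sSup_mem hne hbdd
  refine ⟨τs, hτsne, fun w => ?_⟩
  have hsub := Gam_shift (Φ := Φ) (F := F) w τs
  have hinj : Function.Injective (fun σ : Word N => w ++ σ) := fun a b h => by
    simpa using h
  have hcard_img : ((fun σ => w ++ σ) '' Gam Φ F τs).ncard = (Gam Φ F τs).ncard :=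
    Set.ncard_image_of_injective _ hinj
  have hle : (Gam Φ F (w ++ τs)).ncard ≤ sSup VS := by
    apply le_csSup hbdd
    exact ⟨w ++ τs, by simp [hτsne], rfl⟩
  have := Set.eq_of_subset_of_ncard_le hsub
    (by rw [hcard_img, hτscard]; exact hle) (hM _).1
  exact this.symm

end IFSProof
namespace IFSProof
open Set

variable {N : ℕ} {Φ : IFS N} {F O : Set ℝ}

lemma rw'_replicate (Φ : IFS N) (i : Fin N) (n : ℕ) :
    rw' Φ (List.replicate n i) = Φ.r i ^ n := by
  induction n with
  | zero => simp
  | succ n ih => rw [List.replicate_succ, rw'_cons, ih, pow_succ]; ring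

lemma rw'_le_pow (Φ : IFS N) (ω : Word N) (rmax : ℝ) (hr : ∀ i, Φ.r i ≤ rmax)
    (h0 : 0 ≤ rmax) : rw' Φ ω ≤ rmax ^ ω.length := by
  induction ω with
  | nil => simp
  | cons i ω ih =>
      rw [rw'_cons, List.length_cons, pow_succ]
      have h1 := hr i
      have h2 := rw'_pos Φ ω
      have h3 : (0:ℝ) ≤ rmax ^ ω.length := pow_nonneg h0 _
      nlinarith [Φ.r_pos i]

end IFSProof
open IFSProof in
set_option maxHeartbeats 2000000 in
/-- Under OSC there exist `m ∈ ℕ₀` and `Λ ⊆ Σ^m` such that `U_Λ`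
is a strong and compatible feasible open set for `Φ`. -/
theorem exists_ULambda_strong_compatible_feasible {N : ℕ} (hN : 2 ≤ N)
    (Φ : IFS N) (F : Set ℝ) (hOSC : Φ.OSC) (hF : Φ.IsAttractor F) :
    ∃ (m : ℕ) (Λ : Set (List (Fin N))), (∀ u ∈ Λ, u.length = m) ∧
      Φ.Feasible (Φ.ULambda F Λ) ∧ (Φ.ULambda F Λ ∩ F).Nonempty ∧
      frontier (Φ.ULambda F Λ) ⊆ F := by
  classical
  obtain ⟨O, hO⟩ := hOSC
  haveI : Nonempty (Fin N) := ⟨⟨0, by omega⟩⟩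
  set a := sInf F with hadef
  set b := sSup F with hbdef
  have hab : a < b := attractor_nontrivial hN hO hF
  have haF : a ∈ F := sInf_mem_F hF
  have hbF : b ∈ F := sSup_mem_F hF
  set k := b - a with hkdef
  have hk0 : 0 < k := by rw [hkdef]; linarith
  obtain ⟨τs, hτsne, hrig⟩ := exists_taustar hN hO hF
  set ε' := rw' Φ τs / 2 with hε'def
  have hτs0 : 0 < rw' Φ τs := rw'_pos Φ τs
  have hε'0 : 0 < ε' := by rw [hε'def]; linarith
  set i0 : Fin N := ⟨0, by omega⟩ with hi0def
  obtain ⟨n, hn⟩ := exists_pow_lt_of_lt_one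
    (show (0:ℝ) < 1/(2*k) by positivity) (Φ.r_lt_one i0)
  set v := List.replicate n i0 with hvdef
  set u := τs ++ v with hudef
  have hrwu : rw' Φ u * k < ε' := by
    rw [hudef, rw'_append, hvdef, rw'_replicate, hε'def]
    have h1 : (0:ℝ) < Φ.r i0 ^ n := pow_pos (Φ.r_pos i0) n
    have h2 : Φ.r i0 ^ n * (2 * k) < 1 := by
      calc Φ.r i0 ^ n * (2*k) < 1/(2*k) * (2*k) := by nlinarith [hn]
        _ = 1 := by field_simp
    have h3 := mul_lt_mul_of_pos_left h2 (by linarith : (0:ℝ) < rw' Φ τs / 2)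
    nlinarith
  set I : Set ℝ := Set.Ioo a b with hIdef
  set V := Φ.wordMap u '' I with hVdef
  have hA : ∀ y ∈ V, ∃ q ∈ Φ.wordMap τs '' F, |y - q| < ε' := by
    rintro y ⟨z, hz, rfl⟩
    refine ⟨Φ.wordMap u a, ?_, ?_⟩
    · rw [hudef, wordMap_append]
      exact ⟨Φ.wordMap v a, wordMap_image_F hF v ⟨a, haF, rfl⟩, rfl⟩
    · rw [wordMap_dist]
      have hza : |z - a| ≤ k := by
        rw [abs_of_nonneg (by rw [hIdef] at hz; have := hz.1; linarith)]
        rw [hIdef] at hz; have := hz.2; rw [hkdef]; linarith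
      have h0 := rw'_pos Φ u
      nlinarith
  -- the key pairwise-disjointness fact
  have aux : ∀ (i j : Fin N) (w w' : List (Fin N)), i ≠ j →
      rw' Φ (j::w') ≤ rw' Φ (i::w) →
      ∀ x, x ∈ Φ.wordMap (i::w) '' V → x ∈ Φ.wordMap (j::w') '' V → False := by
    intro i j w w' hij hr x hxA hxB
    set A := i :: w with hAdef
    set B := j :: w' with hBdef
    obtain ⟨y, hyV, hxy⟩ := hxA
    obtain ⟨y', hy'V, hxy'⟩ := hxB
    obtain ⟨q, hqmem, hyq⟩ := hA y hyV
    obtain ⟨q', hq'mem, hy'q'⟩ := hA y' hy'V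
    set ρ := rw' Φ (A ++ τs) with hρdef
    have hρeq : ρ = rw' Φ A * rw' Φ τs := by rw [hρdef, rw'_append]
    have hqA : Φ.wordMap A q ∈ Φ.wordMap (A ++ τs) '' F := by
      rw [wordMap_append, Set.image_comp]
      exact Set.mem_image_of_mem _ hqmem
    have hpB : Φ.wordMap B q' ∈ Φ.wordMap (B ++ τs) '' F := by
      rw [wordMap_append, Set.image_comp]
      exact Set.mem_image_of_mem _ hq'mem
    have hA0 := rw'_pos Φ A
    have hB0 := rw'_pos Φ B
    have h1 : |x - Φ.wordMap A q| < rw' Φ A * ε' := by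
      rw [← hxy, wordMap_dist]
      have := mul_lt_mul_of_pos_left hyq hA0
      linarith
    have h2 : |x - Φ.wordMap B q'| < rw' Φ A * ε' := by
      rw [← hxy', wordMap_dist]
      have t1 := mul_lt_mul_of_pos_left hy'q' hB0
      have t2 := mul_le_mul_of_nonneg_right hr (le_of_lt hε'0)
      linarith
    have hdist : |Φ.wordMap B q' - Φ.wordMap A q| ≤ ρ := by
      have t1 := abs_sub_le (Φ.wordMap B q') x (Φ.wordMap A q)
      have t2 : |Φ.wordMap B q' - x| = |x - Φ.wordMap B q'| := abs_sub_comm _ _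
      rw [hρeq]
      have : 2 * ε' = rw' Φ τs := by rw [hε'def]; ring
      nlinarith
    have hρ1 : ρ < 1 := by
      rw [hρeq, hAdef, rw'_cons]
      have e1 : Φ.r i * rw' Φ w ≤ Φ.r i * 1 :=
        mul_le_mul_of_nonneg_left (rw'_le_one Φ w) (le_of_lt (Φ.r_pos i))
      have e2 : Φ.r i * rw' Φ w * rw' Φ τs ≤ Φ.r i * rw' Φ w * 1 :=
        mul_le_mul_of_nonneg_left (rw'_le_one Φ τs)
          (by nlinarith [Φ.r_pos i, rw'_pos Φ w])
      nlinarith [Φ.r_lt_one i]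
    have hcle : rw' Φ (B ++ τs) ≤ ρ := by
      rw [rw'_append, hρeq]
      nlinarith
    obtain ⟨σ, hσpre, hσsec⟩ := exists_sec_prefix Φ hρ1 (B ++ τs) (by simp [hBdef]) hcle
    obtain ⟨t, ht⟩ := hσpre
    have hpBσ : Φ.wordMap B q' ∈ Φ.wordMap σ '' F := by
      rw [← ht, wordMap_append, Set.image_comp] at hpB
      exact Set.image_mono (wordMap_image_F hF t) hpB
    have hσGam : σ ∈ Gam Φ F (A ++ τs) :=
      ⟨hρdef ▸ hσsec, Φ.wordMap B q', hpBσ, Φ.wordMap A q, hqA, hρdef ▸ hdist⟩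
    rw [hrig A] at hσGam
    obtain ⟨σ', _, hσ'eq⟩ := hσGam
    rw [← hσ'eq] at ht
    apply hij
    have hhead := congrArg List.head? ht
    rw [hAdef, hBdef] at hhead
    simpa using hhead
  -- the answer
  obtain ⟨z₀, hz₀F, hz₀1, hz₀2⟩ := exists_middle hN hO hF
  have hIeq : interior (convexHull ℝ F) = I := interior_hull hN hO hF
  have hUeq : Φ.ULambda F {u} = ⋃ ω : List (Fin N), Φ.wordMap ω '' V := by
    rw [IFS.ULambda, hIeq]
    simp only [Set.biUnion_singleton]
    rfl
  have hmemU : Φ.wordMap u z₀ ∈ Φ.ULambda F {u} := by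
    rw [hUeq]
    exact Set.mem_iUnion.2 ⟨[], by
      simpa using (show Φ.wordMap u z₀ ∈ V from Set.mem_image_of_mem (Φ.wordMap u) (⟨hz₀1, hz₀2⟩ : z₀ ∈ I))⟩
  have hUopen : IsOpen (Φ.ULambda F {u}) := by
    rw [hUeq]
    exact isOpen_iUnion fun ω => (wordMap_isOpenMap Φ ω) _
      ((wordMap_isOpenMap Φ u) _ isOpen_Ioo)
  refine ⟨u.length, {u}, ?_, ⟨⟨_, hmemU⟩, hUopen, ?_, ?_⟩, ?_, ?_⟩
  · intro u' hu'; rw [Set.mem_singleton_iff] at hu'; rw [hu']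
  · -- invariance
    intro i
    rw [hUeq, Set.image_iUnion]
    refine Set.iUnion_subset fun ω => ?_
    rw [← Set.image_comp, ← wordMap_cons]
    exact Set.subset_iUnion (fun ω => Φ.wordMap ω '' V) (i::ω)
  · -- disjointness
    intro i j hij
    rw [hUeq]
    rw [Set.disjoint_left]
    intro x hx1 hx2
    rw [Set.image_iUnion] at hx1 hx2
    obtain ⟨ω, hx1⟩ := Set.mem_iUnion.1 hx1
    obtain ⟨ω', hx2⟩ := Set.mem_iUnion.1 hx2
    rw [← Set.image_comp, ← wordMap_cons] at hx1 hx2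
    rcases le_total (rw' Φ (j::ω')) (rw' Φ (i::ω)) with h | h
    · exact aux i j ω ω' hij h x hx1 hx2
    · exact aux j i ω' ω (Ne.symm hij) h x hx2 hx1
  · -- strong
    exact ⟨Φ.wordMap u z₀, hmemU, wordMap_image_F hF u ⟨z₀, hz₀F, rfl⟩⟩
  · -- compatible
    intro x hx
    rw [hUopen.frontier_eq] at hx
    obtain ⟨hxc, hxn⟩ := hx
    rw [hUeq] at hxc hxn
    by_cases hcase : ∀ L : ℕ,
        x ∈ closure (⋃ ω ∈ {ω : List (Fin N) | L ≤ ω.length}, Φ.wordMap ω '' V)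
    · -- x is a limit of small pieces, hence in F
      obtain ⟨imax, himax⟩ := Finset.exists_mem_eq_sup'
        (Finset.univ_nonempty (α := Fin N)) Φ.r
      set rmax := Finset.univ.sup' Finset.univ_nonempty Φ.r with hrmaxdef
      have hrmax_le : ∀ i, Φ.r i ≤ rmax := fun i => Finset.le_sup' Φ.r (Finset.mem_univ i)
      have hrmax1 : rmax < 1 := by rw [himax.2]; exact Φ.r_lt_one imax
      have hrmax0 : 0 < rmax := by rw [himax.2]; exact Φ.r_pos imax
      have hFclosed : IsClosed F := hF.2.1.isClosed
      rw [← hFclosed.closure_eq]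
      rw [Metric.mem_closure_iff]
      intro ε hε
      obtain ⟨L, hL⟩ := exists_pow_lt_of_lt_one
        (show (0:ℝ) < ε/(2*k) by positivity) hrmax1
      have hcl := hcase L
      rw [Metric.mem_closure_iff] at hcl
      obtain ⟨y, hy, hxy⟩ := hcl (ε/2) (by linarith)
      simp only [Set.mem_iUnion, Set.mem_setOf_eq, exists_prop] at hy
      obtain ⟨ω, hlen, hyV⟩ := hy
      rw [hVdef] at hyV
      obtain ⟨y', ⟨z, hz, rfl⟩, rfl⟩ := hyV
      refine ⟨Φ.wordMap ω (Φ.wordMap u a),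
        wordMap_image_F hF ω ⟨_, wordMap_image_F hF u ⟨a, haF, rfl⟩, rfl⟩, ?_⟩
      have hd1 : dist (Φ.wordMap ω (Φ.wordMap u z)) (Φ.wordMap ω (Φ.wordMap u a)) < ε/2 := by
        rw [Real.dist_eq, wordMap_dist, wordMap_dist]
        have hza : |z - a| ≤ k := by
          rw [abs_of_nonneg (by rw [hIdef] at hz; have := hz.1; linarith)]
          rw [hIdef] at hz; have := hz.2; rw [hkdef]; linarith
        have hω : rw' Φ ω ≤ rmax ^ L := by
          calc rw' Φ ω ≤ rmax ^ ω.length := rw'_le_pow Φ ω rmax hrmax_le (le_of_lt hrmax0)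
            _ ≤ rmax ^ L := pow_le_pow_of_le_one (le_of_lt hrmax0) (le_of_lt hrmax1) hlen
        have hu1 : rw' Φ u ≤ 1 := rw'_le_one Φ u
        have hu0 : 0 < rw' Φ u := rw'_pos Φ u
        have hω0 : 0 < rw' Φ ω := rw'_pos Φ ω
        have hrL : rmax ^ L * (2 * k) < ε := by
          have h2k : (0:ℝ) < 2*k := by positivity
          calc rmax ^ L * (2*k) < ε/(2*k) * (2*k) := by nlinarith [hL]
            _ = ε := by field_simp
        have hpL : (0:ℝ) < rmax ^ L := pow_pos hrmax0 L
        have t1 : rw' Φ u * |z - a| ≤ k := by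
          have := mul_le_mul hu1 hza (abs_nonneg _) zero_le_one
          linarith
        have t2 : rw' Φ ω * (rw' Φ u * |z - a|) ≤ rmax ^ L * k :=
          mul_le_mul hω t1 (by positivity) (le_of_lt hpL)
        linarith
      calc dist x (Φ.wordMap ω (Φ.wordMap u a))
          ≤ dist x (Φ.wordMap ω (Φ.wordMap u z)) + _ := dist_triangle _ _ _
        _ < ε/2 + ε/2 := by exact add_lt_add hxy hd1
        _ = ε := by ring
    · push_neg at hcase
      obtain ⟨L, hL⟩ := hcase
      have hsplit : (⋃ ω : List (Fin N), Φ.wordMap ω '' V) =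
          (⋃ ω ∈ {ω : List (Fin N) | ω.length < L}, Φ.wordMap ω '' V) ∪
          (⋃ ω ∈ {ω : List (Fin N) | L ≤ ω.length}, Φ.wordMap ω '' V) := by
        ext y
        simp only [Set.mem_iUnion, Set.mem_union, Set.mem_setOf_eq, exists_prop]
        constructor
        · rintro ⟨ω, hω⟩
          rcases lt_or_ge ω.length L with h | h
          exacts [Or.inl ⟨ω, h, hω⟩, Or.inr ⟨ω, h, hω⟩]
        · rintro (⟨ω, _, hω⟩ | ⟨ω, _, hω⟩) <;> exact ⟨ω, hω⟩
      rw [hsplit, closure_union] at hxc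
      rcases hxc with hxc | hxc
      swap
      · exact absurd hxc hL
      have hfin : {ω : List (Fin N) | ω.length < L}.Finite :=
        (List.finite_length_le (Fin N) L).subset
          (fun ω (h : ω.length < L) => show ω.length ≤ L from le_of_lt h)
      rw [hfin.closure_biUnion] at hxc
      simp only [Set.mem_iUnion, Set.mem_setOf_eq, exists_prop] at hxc
      obtain ⟨ω, _, hxω⟩ := hxc
      have hpiece : Φ.wordMap ω '' V = Φ.wordMap (ω ++ u) '' I := by
        rw [wordMap_append, Set.image_comp, hVdef]
      obtain ⟨c, d, hcd, hcm, hdm, hioo⟩ := wordMap_image_Ioo Φ (ω ++ u) a b hab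
      rw [hpiece, hIdef, hioo, closure_Ioo (ne_of_lt hcd)] at hxω
      have hnotin : x ∉ Set.Ioo c d := by
        intro h
        exact hxn (Set.mem_iUnion.2 ⟨ω, by rw [hpiece, hIdef, hioo]; exact h⟩)
      have hendF : ∀ e ∈ Φ.wordMap (ω ++ u) '' ({a, b} : Set ℝ), e ∈ F := by
        rintro e ⟨s, hs, rfl⟩
        apply wordMap_image_F hF (ω ++ u)
        rcases hs with rfl | hs
        · exact ⟨a, haF, rfl⟩
        · rw [Set.mem_singleton_iff] at hs; rw [hs]; exact ⟨b, hbF, rfl⟩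
      obtain ⟨h1, h2⟩ := hxω
      by_cases hxc' : x = c
      · rw [hxc']; exact hendF c hcm
      by_cases hxd' : x = d
      · rw [hxd']; exact hendF d hdm
      exact absurd ⟨lt_of_le_of_ne h1 (Ne.symm hxc'), lt_of_le_of_ne h2 hxd'⟩ hnotin
end

section
/- Let Φ be an IFS on ℝ satisfying the open set condition, with self-similar set F. For every m ∈ ℕ₀ and every nonempty Λ ⊆ Σ^m, the set U_Λ = ⋃_{ω∈Σ*} φ_ω(⋃_{u∈Λ} φ_u(I)) satisfies U_Λ ∩ F ≠ ∅ and ∂U_Λ ⊆ F. -/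
open Set Filter MeasureTheory Metric Topology

private lemma aff_form (f : ℝ → ℝ) (r : ℝ) (hr : 0 < r)
    (h : ∀ x y, |f x - f y| = r * |x - y|) :
    ∃ c : ℝ, |c| = r ∧ ∀ x, f x = c * x + f 0 := by
  refine ⟨f 1 - f 0, by simpa using h 1 0, fun x => ?_⟩
  have s1 : (f x - f 0)^2 = r^2 * (x - 0)^2 := by
    rw [← sq_abs (f x - f 0), h x 0, mul_pow, sq_abs]
  have s2 : (f 1 - f 0)^2 = r^2 * (1 - 0)^2 := by
    rw [← sq_abs (f 1 - f 0), h 1 0, mul_pow, sq_abs]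
  have s3 : (f x - f 1)^2 = r^2 * (x - 1)^2 := by
    rw [← sq_abs (f x - f 1), h x 1, mul_pow, sq_abs]
  have hB : (f 1 - f 0) ≠ 0 := by
    intro hB0
    rw [hB0] at s2; nlinarith
  have key : (f x - f 0 - (f 1 - f 0) * x) * (f 1 - f 0) = 0 := by nlinarith
  rcases mul_eq_zero.mp key with h' | h'
  · linarith
  · exact absurd h' hB

private lemma img_Ioo (s d a b : ℝ) (hs : s ≠ 0) (hab : a < b) :
    (fun x => s * x + d) '' Set.Ioo a b =
      Set.Ioo (min (s*a+d) (s*b+d)) (max (s*a+d) (s*b+d)) := by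
  rcases hs.lt_or_gt with h | h
  · have hba : s*b+d < s*a+d := by nlinarith
    rw [min_eq_right hba.le, max_eq_left hba.le]
    ext y
    simp only [Set.mem_image, Set.mem_Ioo]
    constructor
    · rintro ⟨x, ⟨hx1, hx2⟩, rfl⟩
      constructor <;> nlinarith
    · rintro ⟨h1, h2⟩
      refine ⟨(y - d)/s, ⟨?_, ?_⟩, by field_simp; ring⟩
      · rw [lt_div_iff_of_neg h]; nlinarith
      · rw [div_lt_iff_of_neg h]; nlinarith
  · have hba : s*a+d < s*b+d := by nlinarith
    rw [min_eq_left hba.le, max_eq_right hba.le]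
    ext y
    simp only [Set.mem_image, Set.mem_Ioo]
    constructor
    · rintro ⟨x, ⟨hx1, hx2⟩, rfl⟩
      constructor <;> nlinarith
    · rintro ⟨h1, h2⟩
      refine ⟨(y - d)/s, ⟨?_, ?_⟩, by field_simp; ring⟩
      · rw [lt_div_iff₀ h]; nlinarith
      · rw [div_lt_iff₀ h]; nlinarith

private lemma foldr_comp {N : ℕ} (Φ : IFS N) (w : List (Fin N)) (g : ℝ → ℝ) :
    w.foldr (fun i f => Φ.φ i ∘ f) g = Φ.wordMap w ∘ g := by
  induction w with
  | nil => rfl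
  | cons i w ih => simp only [List.foldr_cons, ih]; rfl

private lemma wordMap_append {N : ℕ} (Φ : IFS N) (w u : List (Fin N)) :
    Φ.wordMap (w ++ u) = Φ.wordMap w ∘ Φ.wordMap u := by
  unfold IFS.wordMap
  rw [List.foldr_append]
  exact foldr_comp Φ w _

/-- Under OSC, for every `m ∈ ℕ₀` and every nonempty `Λ ⊆ Σ^m`,
the set `U_Λ` intersects `F` and has boundary contained in `F`. -/
theorem ULambda_strong_compatible {N : ℕ} (hN : 2 ≤ N) (Φ : IFS N) (F : Set ℝ)
    (hOSC : Φ.OSC) (hF : Φ.IsAttractor F) (m : ℕ) (Λ : Set (List (Fin N)))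
    (hΛne : Λ.Nonempty) (hΛ : ∀ u ∈ Λ, u.length = m) :
    (Φ.ULambda F Λ ∩ F).Nonempty ∧ frontier (Φ.ULambda F Λ) ⊆ F := by
  obtain ⟨hFne, hFc, hFmap⟩ := hF
  choose c hc hcf using fun i => aff_form (Φ.φ i) (Φ.r i) (Φ.r_pos i) (Φ.similar i)
  have hcne : ∀ i, c i ≠ 0 := by
    intro i h0
    have h1 := hc i
    rw [h0, abs_zero] at h1
    exact absurd h1.symm (ne_of_gt (Φ.r_pos i))
  have hφF : ∀ i, Φ.φ i '' F ⊆ F := by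
    intro i
    conv_rhs => rw [← hFmap]
    exact Set.subset_iUnion (fun i => Φ.φ i '' F) i
  rcases F.subsingleton_or_nontrivial with hss | hnt
  · -- `F` a singleton contradicts the OSC
    exfalso
    obtain ⟨q, hq⟩ := hFne
    have hFq : F = {q} := hss.eq_singleton_of_mem hq
    have hfix : ∀ i, Φ.φ i q = q := by
      intro i
      have h1 : Φ.φ i q ∈ F := hφF i ⟨q, hq, rfl⟩
      rw [hFq] at h1
      exact h1
    obtain ⟨O, hOne, hOopen, hOsub, hOdisj⟩ := hOSC
    have hij : (⟨0, by omega⟩ : Fin N) ≠ ⟨1, by omega⟩ := by simp [Fin.ext_iff]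
    set i : Fin N := ⟨0, by omega⟩
    set j : Fin N := ⟨1, by omega⟩
    have hcomm : Φ.φ i ∘ Φ.φ j = Φ.φ j ∘ Φ.φ i := by
      funext x
      have di : Φ.φ i 0 = q - c i * q := by
        have h1 := hcf i q; rw [hfix i] at h1; linarith
      have dj : Φ.φ j 0 = q - c j * q := by
        have h1 := hcf j q; rw [hfix j] at h1; linarith
      simp only [Function.comp_apply]
      rw [hcf i (Φ.φ j x), hcf j x, hcf j (Φ.φ i x), hcf i x, di, dj]
      ring
    have hsubij : Φ.φ i '' (Φ.φ j '' O) ⊆ Φ.φ i '' O := Set.image_mono (hOsub j)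
    have hsubji : Φ.φ i '' (Φ.φ j '' O) ⊆ Φ.φ j '' O := by
      rw [← Set.image_comp, hcomm, Set.image_comp]
      exact Set.image_mono (hOsub i)
    obtain ⟨x, hx⟩ := hOne
    have hxS : Φ.φ i (Φ.φ j x) ∈ Φ.φ i '' (Φ.φ j '' O) := ⟨_, ⟨x, hx, rfl⟩, rfl⟩
    exact Set.disjoint_left.mp (hOdisj i j hij) (hsubij hxS) (hsubji hxS)
  · set α := sInf F with hαdef
    set β := sSup F with hβdef
    have hbdA : BddAbove F := hFc.bddAbove
    have hbdB : BddBelow F := hFc.bddBelow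
    have hαF : α ∈ F := hFc.sInf_mem hFne
    have hβF : β ∈ F := hFc.sSup_mem hFne
    have hsubIcc : F ⊆ Set.Icc α β := fun x hx => ⟨csInf_le hbdB hx, le_csSup hbdA hx⟩
    have hαβ : α < β := by
      obtain ⟨a, haF, b, hbF, hab⟩ := hnt
      rcases lt_or_ge α β with h | h
      · exact h
      · exfalso
        have h1 := hsubIcc haF
        have h2 := hsubIcc hbF
        exact hab (by linarith [h1.1, h1.2, h2.1, h2.2])
    have hhull : convexHull ℝ F = Set.Icc α β := by
      apply subset_antisymm
      · exact convexHull_min hsubIcc (convex_Icc _ _)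
      · rw [← segment_eq_Icc hαβ.le]
        exact segment_subset_convexHull hαF hβF
    have hIeq : interior (convexHull ℝ F) = Set.Ioo α β := by rw [hhull, interior_Icc]
    have hwF : ∀ w : List (Fin N), Φ.wordMap w '' F ⊆ F := by
      intro w
      induction w with
      | nil => simp [IFS.wordMap]
      | cons i w ih =>
        have hco : Φ.wordMap (i :: w) = Φ.φ i ∘ Φ.wordMap w := rfl
        rw [hco, Set.image_comp]
        exact (Set.image_mono ih).trans (hφF i)
    have hwaff : ∀ w : List (Fin N), ∃ s d : ℝ, s ≠ 0 ∧ ∀ x, Φ.wordMap w x = s * x + d := by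
      intro w
      induction w with
      | nil => exact ⟨1, 0, one_ne_zero, fun x => by simp [IFS.wordMap]⟩
      | cons i w ih =>
        obtain ⟨s, d, hs, hsd⟩ := ih
        refine ⟨c i * s, c i * d + Φ.φ i 0, mul_ne_zero (hcne i) hs, fun x => ?_⟩
        have hco : Φ.wordMap (i :: w) x = Φ.φ i (Φ.wordMap w x) := rfl
        rw [hco, hcf i (Φ.wordMap w x), hsd x]
        ring
    have hpiece : ∀ w : List (Fin N), ∃ g h : ℝ, g ∈ F ∧ h ∈ F ∧ g < h ∧
        Φ.wordMap w '' (Set.Ioo α β) = Set.Ioo g h := by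
      intro w
      obtain ⟨s, d, hs, hsd⟩ := hwaff w
      have himg : Φ.wordMap w '' (Set.Ioo α β) = (fun x => s * x + d) '' (Set.Ioo α β) :=
        Set.image_congr' hsd
      have hm1 : s*α+d ∈ F := by
        rw [← hsd α]; exact hwF w ⟨α, hαF, rfl⟩
      have hm2 : s*β+d ∈ F := by
        rw [← hsd β]; exact hwF w ⟨β, hβF, rfl⟩
      have hne2 : s*α+d ≠ s*β+d := by
        intro hcon
        have hz : s * (β - α) = 0 := by linarith
        rcases mul_eq_zero.mp hz with h' | h'
        · exact hs h'
        · linarith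
      refine ⟨min (s*α+d) (s*β+d), max (s*α+d) (s*β+d), ?_, ?_, min_lt_max.mpr hne2,
        by rw [himg, img_Ioo s d α β hs hαβ]⟩
      · rcases min_cases (s*α+d) (s*β+d) with ⟨he, -⟩ | ⟨he, -⟩
        · rw [he]; exact hm1
        · rw [he]; exact hm2
      · rcases max_cases (s*α+d) (s*β+d) with ⟨he, -⟩ | ⟨he, -⟩
        · rw [he]; exact hm1
        · rw [he]; exact hm2
    have hpieceSub : ∀ g h : ℝ, g ∈ F → h ∈ F → Set.Ioo g h ⊆ Set.Ioo α β := by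
      intro g h hg hh x hx
      exact ⟨lt_of_le_of_lt (hsubIcc hg).1 hx.1, lt_of_lt_of_le hx.2 (hsubIcc hh).2⟩
    have hUdef : Φ.ULambda F Λ
        = ⋃ ω : List (Fin N), ⋃ u ∈ Λ, Φ.wordMap (ω ++ u) '' (Set.Ioo α β) := by
      simp only [IFS.ULambda, hIeq, Set.image_iUnion₂, ← Set.image_comp, ← wordMap_append]
    have hUsub : Φ.ULambda F Λ ⊆ Set.Ioo α β := by
      rw [hUdef]
      refine Set.iUnion_subset fun ω => Set.iUnion₂_subset fun u hu => ?_
      obtain ⟨g, h, hg, hh, -, heq⟩ := hpiece (ω ++ u)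
      rw [heq]
      exact hpieceSub g h hg hh
    constructor
    · -- U_Λ meets F
      have hinf : F.Infinite := by
        by_contra hfin
        rw [Set.not_infinite] at hfin
        set i : Fin N := ⟨0, by omega⟩
        have hinj : Function.Injective (Φ.φ i) := by
          intro x y hxy
          rw [hcf i x, hcf i y] at hxy
          exact mul_left_cancel₀ (hcne i) (by linarith)
        have himgF : Φ.φ i '' F = F :=
          Set.eq_of_subset_of_ncard_le (hφF i)
            (by rw [Set.ncard_image_of_injective _ hinj]) hfin
        rcases (hcne i).lt_or_gt with hci | hci
        · -- c i < 0 : φ i is antitone, swaps the endpoints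
          have hmono : ∀ x y, x ≤ y → Φ.φ i y ≤ Φ.φ i x := by
            intro x y hxy
            rw [hcf i x, hcf i y]
            nlinarith
          have h1 : Φ.φ i α = β := by
            have hub : Φ.φ i α ≤ β := (hsubIcc (hφF i ⟨α, hαF, rfl⟩)).2
            obtain ⟨t, htF, ht⟩ := himgF.symm ▸ hβF
            have h2 := hmono α t (hsubIcc htF).1
            rw [ht] at h2
            linarith
          have h2 : Φ.φ i β = α := by
            have hlb : α ≤ Φ.φ i β := (hsubIcc (hφF i ⟨β, hβF, rfl⟩)).1
            obtain ⟨t, htF, ht⟩ := himgF.symm ▸ hαF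
            have h3 := hmono t β (hsubIcc htF).2
            rw [ht] at h3
            linarith
          have e1 : c i * α + Φ.φ i 0 = β := by rw [← hcf i α]; exact h1
          have e2 : c i * β + Φ.φ i 0 = α := by rw [← hcf i β]; exact h2
          have hz : (c i + 1) * (α - β) = 0 := by linear_combination e1 - e2
          rcases mul_eq_zero.mp hz with h' | h'
          · have hr1 := hc i
            have : c i = -1 := by linarith
            rw [this] at hr1
            norm_num at hr1
            linarith [Φ.r_lt_one i]
          · linarith
        · -- 0 < c i : φ i is monotone, fixes the endpoints
          have hmono : ∀ x y, x ≤ y → Φ.φ i x ≤ Φ.φ i y := by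
            intro x y hxy
            rw [hcf i x, hcf i y]
            nlinarith
          have h1 : Φ.φ i β = β := by
            have hub : Φ.φ i β ≤ β := (hsubIcc (hφF i ⟨β, hβF, rfl⟩)).2
            obtain ⟨t, htF, ht⟩ := himgF.symm ▸ hβF
            have h2 := hmono t β (hsubIcc htF).2
            rw [ht] at h2
            linarith
          have h2 : Φ.φ i α = α := by
            have hlb : α ≤ Φ.φ i α := (hsubIcc (hφF i ⟨α, hαF, rfl⟩)).1
            obtain ⟨t, htF, ht⟩ := himgF.symm ▸ hαF
            have h3 := hmono α t (hsubIcc htF).1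
            rw [ht] at h3
            linarith
          have e1 : c i * β + Φ.φ i 0 = β := by rw [← hcf i β]; exact h1
          have e2 : c i * α + Φ.φ i 0 = α := by rw [← hcf i α]; exact h2
          have hz : (c i - 1) * (β - α) = 0 := by linear_combination e1 - e2
          rcases mul_eq_zero.mp hz with h' | h'
          · have hr1 := hc i
            have : c i = 1 := by linarith
            rw [this] at hr1
            norm_num at hr1
            linarith [Φ.r_lt_one i]
          · linarith
      obtain ⟨x₀, hx₀⟩ := (hinf.diff (Set.toFinite {α, β})).nonempty
      have hx₀F : x₀ ∈ F := hx₀.1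
      have hx₀ne : x₀ ≠ α ∧ x₀ ≠ β := by
        have h1 := hx₀.2
        simpa [not_or] using h1
      have hx₀I : x₀ ∈ Set.Ioo α β := by
        have h1 := hsubIcc hx₀F
        exact ⟨lt_of_le_of_ne h1.1 (Ne.symm hx₀ne.1), lt_of_le_of_ne h1.2 hx₀ne.2⟩
      obtain ⟨u, hu⟩ := hΛne
      refine ⟨Φ.wordMap u x₀, ?_, hwF u ⟨x₀, hx₀F, rfl⟩⟩
      rw [hUdef]
      exact Set.mem_iUnion.mpr ⟨[], Set.mem_iUnion₂.mpr ⟨u, hu, ⟨x₀, hx₀I, rfl⟩⟩⟩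
    · -- frontier U_Λ ⊆ F
      intro x hx
      have hxcl : x ∈ closure (Φ.ULambda F Λ) := frontier_subset_closure hx
      have hxIcc : x ∈ Set.Icc α β := by
        have hcl : closure (Φ.ULambda F Λ) ⊆ closure (Set.Ioo α β) := closure_mono hUsub
        rw [closure_Ioo hαβ.ne] at hcl
        exact hcl hxcl
      by_contra hxF
      have hxI : x ∈ Set.Ioo α β :=
        ⟨lt_of_le_of_ne hxIcc.1 (fun h => hxF (h ▸ hαF)),
         lt_of_le_of_ne hxIcc.2 (fun h => hxF (by rw [h]; exact hβF))⟩
      have hE1c : IsCompact (F ∩ Set.Iic x) := hFc.inter_right isClosed_Iic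
      have hE1ne : (F ∩ Set.Iic x).Nonempty := ⟨α, hαF, hxI.1.le⟩
      set e := sSup (F ∩ Set.Iic x) with hedef
      have heE : e ∈ F ∩ Set.Iic x := hE1c.sSup_mem hE1ne
      have hex : e < x := lt_of_le_of_ne heE.2 (fun h => hxF (h ▸ heE.1))
      have hE2c : IsCompact (F ∩ Set.Ici x) := hFc.inter_right isClosed_Ici
      have hE2ne : (F ∩ Set.Ici x).Nonempty := ⟨β, hβF, hxI.2.le⟩
      set f := sInf (F ∩ Set.Ici x) with hfdef
      have hfE : f ∈ F ∩ Set.Ici x := hE2c.sInf_mem hE2ne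
      have hxf : x < f := lt_of_le_of_ne hfE.2 (fun h => hxF (by rw [h]; exact hfE.1))
      obtain ⟨y, hyIoo, hyU⟩ := mem_closure_iff.mp hxcl (Set.Ioo e f) isOpen_Ioo ⟨hex, hxf⟩
      rw [hUdef] at hyU
      obtain ⟨ω, hyU⟩ := Set.mem_iUnion.mp hyU
      obtain ⟨u, hu, hyU⟩ := Set.mem_iUnion₂.mp hyU
      obtain ⟨g, h, hgF, hhF, hgh, heq⟩ := hpiece (ω ++ u)
      rw [heq] at hyU
      have hgx : g < x := by
        by_contra hcon
        push_neg at hcon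
        have hfg : f ≤ g := csInf_le hE2c.bddBelow ⟨hgF, hcon⟩
        linarith [hyU.1, hyIoo.2]
      have hhx : x < h := by
        by_contra hcon
        push_neg at hcon
        have hhe : h ≤ e := le_csSup hE1c.bddAbove ⟨hhF, hcon⟩
        linarith [hyU.2, hyIoo.1]
      have hxint : x ∈ interior (Φ.ULambda F Λ) := by
        rw [mem_interior]
        refine ⟨Set.Ioo g h, ?_, isOpen_Ioo, hgx, hhx⟩
        rw [hUdef]
        intro z hz
        exact Set.mem_iUnion.mpr ⟨ω, Set.mem_iUnion₂.mpr ⟨u, hu, by rw [heq]; exact hz⟩⟩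
      exact hx.2 hxint
end

section
/- Let F ⊂ ℝ be a nontrivial self-similar set generated by a lattice IFS Φ with base r, and suppose Φ satisfies the open set condition with a strong feasible open set O that satisfies the projection condition. Let D be the Minkowski dimension of F, Γ = O \ ΦO, and g = sup{dist(x, F) : x ∈ Γ}. Then the series Σ_{ℓ=0}^∞ r^{ℓ(D−1)} λ(F_{r^ℓ ε} ∩ Γ) converges uniformly in ε on (rg, g]: for every δ > 0 there is n ∈ ℕ such that Σ_{ℓ=n}^∞ r^{ℓ(D−1)} λ(F_{r^ℓ ε} ∩ Γ) < δ for all ε ∈ (rg, g]. -/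
open Set Filter MeasureTheory Metric Topology

lemma aux_slope {φ : ℝ → ℝ} {r : ℝ} (hr : 0 < r)
    (hsim : ∀ x y, |φ x - φ y| = r * |x - y|) :
    ∃ k : ℝ, |k| = r ∧ ∀ x, φ x = φ 0 + k * x := by
  set c := φ 0 with hc
  have hsq : ∀ x y : ℝ, (φ x - φ y) ^ 2 = r ^ 2 * (x - y) ^ 2 := by
    intro x y
    have h := hsim x y
    calc (φ x - φ y) ^ 2 = |φ x - φ y| ^ 2 := (sq_abs _).symm
      _ = (r * |x - y|) ^ 2 := by rw [h]
      _ = r ^ 2 * (x - y) ^ 2 := by rw [mul_pow, sq_abs]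
  have h1 : φ 1 - c ≠ 0 := by
    have := hsim 1 0
    intro h
    rw [hc] at h
    rw [h] at this
    simp at this
    rcases this with h' | h' <;> nlinarith
  refine ⟨r ^ 2 / (φ 1 - c), ?_, ?_⟩
  · have h2 : (φ 1 - c) ^ 2 = r ^ 2 := by
      have := hsq 1 0
      simpa [hc] using this
    rw [abs_div, abs_of_nonneg (by positivity : (0:ℝ) ≤ r ^ 2)]
    have habs : |φ 1 - c| = r := by
      have : |φ 1 - c| ^ 2 = r ^ 2 := by rw [sq_abs]; exact h2
      nlinarith [abs_nonneg (φ 1 - c), hr]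
    rw [habs]; field_simp
  · intro x
    have e1 : (φ x - c) ^ 2 = r ^ 2 * x ^ 2 := by simpa [hc] using hsq x 0
    have e2 : (φ 1 - c) ^ 2 = r ^ 2 := by simpa [hc] using hsq 1 0
    have e3 : (φ x - φ 1) ^ 2 = r ^ 2 * (x - 1) ^ 2 := hsq x 1
    have key : (φ x - c) * (φ 1 - c) = r ^ 2 * x := by nlinarith
    field_simp
    nlinarith [key]


lemma aux_image_eq_preimage {k c : ℝ} (hk : k ≠ 0) (A : Set ℝ) :
    (fun x => c + k * x) '' A = (fun y => (y - c) / k) ⁻¹' A := by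
  ext y
  simp only [mem_image, mem_preimage]
  constructor
  · rintro ⟨x, hx, rfl⟩; simpa [mul_comm, mul_div_assoc, hk] using hx
  · intro h; exact ⟨(y - c)/k, h, by field_simp; ring⟩

lemma aux_volume_image {k c : ℝ} (hk : k ≠ 0) (A : Set ℝ) :
    volume ((fun x => c + k * x) '' A) = ENNReal.ofReal |k| * volume A := by
  rw [aux_image_eq_preimage hk]
  have h1 : (fun y : ℝ => (y - c) / k) = (fun z : ℝ => k⁻¹ * z) ∘ (fun y : ℝ => -c + y) := by
    funext y; show (y - c) / k = k⁻¹ * (-c + y); field_simp; ring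
  rw [h1, Set.preimage_comp]
  rw [measure_preimage_add volume (-c) _]
  rw [Real.volume_preimage_mul_left (inv_ne_zero hk), inv_inv]

lemma aux_mem_cth {S : Set ℝ} {t x : ℝ} (hS : S.Nonempty) (ht : 0 ≤ t) :
    x ∈ cthickening t S ↔ infDist x S ≤ t := by
  rw [Metric.mem_cthickening_iff, Metric.infDist,
    ← ENNReal.le_ofReal_iff_toReal_le (Metric.infEdist_ne_top hS) ht]

lemma aux_le_infDist {S : Set ℝ} {x b : ℝ} (hS : S.Nonempty) :
    b ≤ infDist x S ↔ ∀ y ∈ S, b ≤ dist x y := by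
  have : Nonempty S := hS.to_subtype
  rw [infDist_eq_iInf]
  rw [le_ciInf_iff ⟨0, fun z hz => by obtain ⟨y, rfl⟩ := hz; exact dist_nonneg⟩]
  exact ⟨fun h y hy => h ⟨y, hy⟩, fun h y => h y y.2⟩

lemma aux_infDist_image {k c : ℝ} (hk : k ≠ 0) {S : Set ℝ} (hS : S.Nonempty) (x : ℝ) :
    infDist (c + k * x) ((fun x => c + k * x) '' S) = |k| * infDist x S := by
  have hdist : ∀ a b : ℝ, dist (c + k * a) (c + k * b) = |k| * dist a b := by
    intro a b
    rw [Real.dist_eq, Real.dist_eq, ← abs_mul]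
    congr 1; ring
  have hkpos : 0 < |k| := abs_pos.2 hk
  apply le_antisymm
  · rw [← div_le_iff₀' hkpos, aux_le_infDist hS]
    intro y hy
    rw [div_le_iff₀' hkpos, ← hdist]
    exact infDist_le_dist_of_mem (mem_image_of_mem _ hy)
  · rw [aux_le_infDist (hS.image _)]
    rintro y ⟨z, hz, rfl⟩
    rw [hdist]
    exact mul_le_mul_of_nonneg_left (infDist_le_dist_of_mem hz) hkpos.le

set_option maxHeartbeats 2000000 in
/-- The series `Σ_ℓ ρ^(ℓ(D-1)) λ(F_{ρ^ℓ ε} ∩ Γ)` converges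
uniformly in `ε` on `(ρg, g]`. -/
theorem series_converges_uniformly {N : ℕ} (hN : 2 ≤ N) (Φ : IFS N)
    (F O : Set ℝ) (D ρ : ℝ) (hF : Φ.IsAttractor F) (hbase : Φ.IsLatticeBase ρ)
    (hfeas : Φ.Feasible O) (hstrong : (O ∩ F).Nonempty) (hproj : Φ.ProjCond F O)
    (hdim : HasMinkowskiDim F D) (hD : D < 1) :
    let Γ : Set ℝ := O \ Φ.map O
    let g : ℝ := sSup ((fun x => Metric.infDist x F) '' Γ)
    let term : ℕ → ℝ → ℝ := fun ℓ ε => ρ ^ ((ℓ : ℝ) * (D - 1)) *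
      (volume (Metric.cthickening (ρ ^ ℓ * ε) F ∩ Γ)).toReal
    (∀ ε ∈ Set.Ioc (ρ * g) g, Summable fun ℓ : ℕ => term ℓ ε) ∧
      ∀ δ > (0:ℝ), ∃ n : ℕ, ∀ ε ∈ Set.Ioc (ρ * g) g,
        (∑' ℓ : ℕ, term (ℓ + n) ε) < δ := by
  classical
  intro Γ g term
  obtain ⟨hFne, hFc, hmapF⟩ := hF
  obtain ⟨a, ha, hρa, hka, -⟩ := hbase
  obtain ⟨hOne, hOopen, hφO, hdisj⟩ := hfeas
  have hρ0 : 0 < ρ := by rw [hρa]; exact Real.exp_pos _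
  have hρ1 : ρ < 1 := by
    rw [hρa]; rw [Real.exp_lt_one_iff]; linarith
  have hNpos : 0 < N := by omega
  haveI : Nonempty (Fin N) := Fin.pos_iff_nonempty.1 hNpos
  -- the ratios are integer powers of ρ
  have hm : ∀ i, ∃ m : ℕ, 1 ≤ m ∧ Φ.r i = ρ ^ m := by
    intro i
    obtain ⟨kz, hkz⟩ := hka i
    have hlogneg : Real.log (Φ.r i) < 0 := Real.log_neg (Φ.r_pos i) (Φ.r_lt_one i)
    have hkzneg : kz < 0 := by
      by_contra h
      push_neg at h
      have : (0:ℝ) ≤ (kz:ℝ) * a := mul_nonneg (by exact_mod_cast h) ha.le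
      linarith [hkz ▸ this]
    refine ⟨(-kz).toNat, ?_, ?_⟩
    · omega
    · have hcast : (((-kz).toNat : ℤ) : ℝ) = -(kz : ℝ) := by
        rw [Int.toNat_of_nonneg (by omega)]
        push_cast
        ring
      have : ρ ^ (-kz).toNat = Real.exp (((-kz).toNat : ℝ) * (-a)) := by
        rw [hρa, ← Real.exp_nat_mul]
      rw [this]
      have hrexp : Φ.r i = Real.exp ((kz : ℝ) * a) := by
        rw [← hkz, Real.exp_log (Φ.r_pos i)]
      rw [hrexp]
      congr 1
      have : (((-kz).toNat : ℕ) : ℝ) = -(kz:ℝ) := by exact_mod_cast hcast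
      rw [this]
      ring
  choose m hm1 hmρ using hm
  -- affine structure of the maps
  have hk : ∀ i, ∃ k : ℝ, |k| = Φ.r i ∧ ∀ x, Φ.φ i x = Φ.φ i 0 + k * x :=
    fun i => aux_slope (Φ.r_pos i) (Φ.similar i)
  choose k hkabs hkeq using hk
  have hk0 : ∀ i, k i ≠ 0 := by
    intro i h
    have := hkabs i
    rw [h, abs_zero] at this
    exact absurd this.symm (ne_of_gt (Φ.r_pos i))
  have hφfun : ∀ i, Φ.φ i = fun x => Φ.φ i 0 + k i * x := fun i => funext (hkeq i)
  -- basic facts about F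
  have hφF : ∀ i, Φ.φ i '' F ⊆ F := by
    intro i
    calc Φ.φ i '' F ⊆ Φ.map F := subset_iUnion (fun j => Φ.φ j '' F) i
      _ = F := hmapF
  -- volume scaling
  have hvol : ∀ i (A : Set ℝ), volume (Φ.φ i '' A) = ENNReal.ofReal (Φ.r i) * volume A := by
    intro i A
    rw [hφfun i, aux_volume_image (hk0 i), hkabs i]
  have hmeas : ∀ i (A : Set ℝ), MeasurableSet A → MeasurableSet (Φ.φ i '' A) := by
    intro i A hA
    rw [hφfun i, aux_image_eq_preimage (hk0 i)]
    exact hA.preimage (by fun_prop)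
  -- thickening notation
  set Fth : ℝ → Set ℝ := fun δ => cthickening δ F with hFth
  have hFthbdd : ∀ δ, volume (Fth δ) ≠ ⊤ := by
    intro δ
    exact (hFc.isBounded.cthickening.measure_lt_top).ne
  have hFthmem : ∀ {δ x}, 0 ≤ δ → (x ∈ Fth δ ↔ infDist x F ≤ δ) :=
    fun {δ x} hδ => aux_mem_cth hFne hδ
  -- scaling inclusion: φᵢ(F_{δ/rᵢ} ∩ A) ⊆ F_δ ∩ φᵢ(A)
  have him : ∀ i (S : Set ℝ), S.Nonempty → ∀ x,
      infDist (Φ.φ i x) (Φ.φ i '' S) = Φ.r i * infDist x S := by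
    intro i S hS x
    have h := aux_infDist_image (c := Φ.φ i 0) (hk0 i) hS x
    rw [hkabs i] at h
    calc infDist (Φ.φ i x) (Φ.φ i '' S)
        = infDist (Φ.φ i 0 + k i * x) ((fun y => Φ.φ i 0 + k i * y) '' S) := by
          rw [hkeq i x]
          congr 1
          exact image_congr fun y _ => hkeq i y
      _ = Φ.r i * infDist x S := h
  have hdist : ∀ i (x y : ℝ), dist (Φ.φ i x) (Φ.φ i y) = Φ.r i * dist x y := by
    intro i x y
    rw [Real.dist_eq, Real.dist_eq, Φ.similar]
  have hincl : ∀ i (A : Set ℝ) δ, 0 < δ →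
      Φ.φ i '' (Fth (δ / Φ.r i) ∩ A) ⊆ Fth δ ∩ Φ.φ i '' A := by
    rintro i A δ hδ y ⟨w, ⟨hw1, hw2⟩, rfl⟩
    have hri := Φ.r_pos i
    refine ⟨?_, mem_image_of_mem _ hw2⟩
    rw [hFthmem hδ.le]
    have h1 : infDist (Φ.φ i w) F ≤ infDist (Φ.φ i w) (Φ.φ i '' F) :=
      infDist_le_infDist_of_subset (hφF i) (hFne.image _)
    rw [him i F hFne w] at h1
    have h2 : infDist w F ≤ δ / Φ.r i := (hFthmem (by positivity)).1 hw1
    calc infDist (Φ.φ i w) F ≤ Φ.r i * infDist w F := h1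
      _ ≤ Φ.r i * (δ / Φ.r i) := by
          exact mul_le_mul_of_nonneg_left h2 hri.le
      _ = δ := by field_simp
  -- covering: F_δ ⊆ ⋃ φᵢ(F_{δ/rᵢ})
  have hcov : ∀ δ, 0 < δ → Fth δ ⊆ ⋃ i, Φ.φ i '' (Fth (δ / Φ.r i)) := by
    intro δ hδ x hx
    have hxd : infDist x F ≤ δ := (hFthmem hδ.le).1 hx
    obtain ⟨y, hyF, hyd⟩ := hFc.exists_infDist_eq_dist hFne x
    have hyF' : y ∈ ⋃ i, Φ.φ i '' F := by rw [show (⋃ i, Φ.φ i '' F) = F from hmapF]; exact hyF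
    rw [mem_iUnion] at hyF'
    obtain ⟨i, z, hzF, hyz⟩ := hyF'
    have hri := Φ.r_pos i
    set w : ℝ := (x - Φ.φ i 0) / k i with hw
    have hxw : Φ.φ i w = x := by
      rw [hkeq i w, hw]
      field_simp [hk0 i]
      ring
    have hdwz : dist w z ≤ δ / Φ.r i := by
      have : Φ.r i * dist w z = dist x y := by
        rw [← hdist i w z, hxw, hyz]
      rw [le_div_iff₀ hri, mul_comm (dist w z)]
      rw [this, ← hyd]
      exact hxd
    have hwmem : w ∈ Fth (δ / Φ.r i) := by
      rw [hFthmem (by positivity)]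
      exact le_trans (infDist_le_dist_of_mem hzF) hdwz
    exact mem_iUnion.2 ⟨i, w, hwmem, hxw⟩
  set f : ℝ → ℝ := fun δ => (volume (Fth δ ∩ O)).toReal with hf
  set V : ℝ → ℝ := fun δ => (volume (Fth δ)).toReal with hV
  have hf_nonneg : ∀ δ, 0 ≤ f δ := fun δ => ENNReal.toReal_nonneg
  have hfV : ∀ δ, f δ ≤ V δ := by
    intro δ
    exact ENNReal.toReal_mono (hFthbdd δ) (measure_mono inter_subset_left)
  -- the renewal inequality
  have hrenew : ∀ δ, 0 < δ →
      (volume (Fth δ ∩ Γ)).toReal + ∑ i, Φ.r i * f (δ / Φ.r i) ≤ f δ := by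
    intro δ hδ
    set S : Fin N → Set ℝ := fun i => Φ.φ i '' (Fth (δ / Φ.r i) ∩ O) with hS
    have hSsub : ∀ i, S i ⊆ Fth δ ∩ Φ.φ i '' O := fun i => hincl i O δ hδ
    have hSmeas : ∀ i, MeasurableSet (S i) := fun i =>
      hmeas i _ ((isClosed_cthickening.measurableSet).inter hOopen.measurableSet)
    have hSdisj : Pairwise (Function.onFun Disjoint S) := by
      intro i j hij
      exact (hdisj i j hij).mono
        (le_trans (hSsub i) inter_subset_right)
        (le_trans (hSsub j) inter_subset_right)
    have hGdisj : Disjoint (Fth δ ∩ Γ) (⋃ i, S i) := by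
      rw [Set.disjoint_left]
      rintro x ⟨-, hxΓ⟩ hxS
      rw [mem_iUnion] at hxS
      obtain ⟨i, hxi⟩ := hxS
      exact hxΓ.2 (mem_iUnion.2 ⟨i, ((hSsub i) hxi).2⟩)
    have hunion : (Fth δ ∩ Γ) ∪ ⋃ i, S i ⊆ Fth δ ∩ O := by
      apply union_subset
      · exact inter_subset_inter_right _ diff_subset
      · apply iUnion_subset
        intro i
        exact le_trans (hSsub i) (inter_subset_inter_right _ (hφO i))
    have hEN : volume (Fth δ ∩ Γ) + ∑ i, ENNReal.ofReal (Φ.r i) * volume (Fth (δ / Φ.r i) ∩ O)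
        ≤ volume (Fth δ ∩ O) := by
      have h1 : volume ((Fth δ ∩ Γ) ∪ ⋃ i, S i)
          = volume (Fth δ ∩ Γ) + ∑' i, volume (S i) := by
        rw [measure_union hGdisj (MeasurableSet.iUnion hSmeas),
          measure_iUnion hSdisj hSmeas]
      have h2 : ∀ i, volume (S i) = ENNReal.ofReal (Φ.r i) * volume (Fth (δ / Φ.r i) ∩ O) :=
        fun i => hvol i _
      calc volume (Fth δ ∩ Γ) + ∑ i, ENNReal.ofReal (Φ.r i) * volume (Fth (δ / Φ.r i) ∩ O)
          = volume (Fth δ ∩ Γ) + ∑' i, volume (S i) := by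
            rw [tsum_fintype]
            congr 1
            exact (Finset.sum_congr rfl (fun i _ => (h2 i).symm))
        _ = volume ((Fth δ ∩ Γ) ∪ ⋃ i, S i) := h1.symm
        _ ≤ volume (Fth δ ∩ O) := measure_mono hunion
    have hfinO : volume (Fth δ ∩ O) ≠ ⊤ :=
      ne_top_of_le_ne_top (hFthbdd δ) (measure_mono inter_subset_left)
    have := ENNReal.toReal_mono hfinO hEN
    rw [ENNReal.toReal_add, ENNReal.toReal_sum] at this
    · convert this using 2
      apply Finset.sum_congr rfl
      intro i _
      rw [ENNReal.toReal_mul, ENNReal.toReal_ofReal (Φ.r_pos i).le]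
    · intro i _
      exact ENNReal.mul_ne_top ENNReal.ofReal_ne_top
        (ne_top_of_le_ne_top (hFthbdd _) (measure_mono inter_subset_left))
    · exact ne_top_of_le_ne_top (hFthbdd δ) (measure_mono inter_subset_left)
    · apply ENNReal.sum_ne_top.2
      intro i _
      exact ENNReal.mul_ne_top ENNReal.ofReal_ne_top
        (ne_top_of_le_ne_top (hFthbdd _) (measure_mono inter_subset_left))
  -- the covering inequality
  have hVsub : ∀ δ, 0 < δ → V δ ≤ ∑ i, Φ.r i * V (δ / Φ.r i) := by
    intro δ hδ
    have hEN : volume (Fth δ) ≤ ∑ i, ENNReal.ofReal (Φ.r i) * volume (Fth (δ / Φ.r i)) := by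
      calc volume (Fth δ) ≤ volume (⋃ i, Φ.φ i '' (Fth (δ / Φ.r i))) :=
            measure_mono (hcov δ hδ)
        _ ≤ ∑' i, volume (Φ.φ i '' (Fth (δ / Φ.r i))) := measure_iUnion_le _
        _ = ∑ i, ENNReal.ofReal (Φ.r i) * volume (Fth (δ / Φ.r i)) := by
            rw [tsum_fintype]
            exact Finset.sum_congr rfl (fun i _ => hvol i _)
    have hfin : (∑ i, ENNReal.ofReal (Φ.r i) * volume (Fth (δ / Φ.r i))) ≠ ⊤ := by
      apply ENNReal.sum_ne_top.2
      intro i _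
      exact ENNReal.mul_ne_top ENNReal.ofReal_ne_top (hFthbdd _)
    have := ENNReal.toReal_mono hfin hEN
    rw [ENNReal.toReal_sum] at this
    · convert this using 1
      apply Finset.sum_congr rfl
      intro i _
      rw [ENNReal.toReal_mul, ENNReal.toReal_ofReal (Φ.r_pos i).le]
    · intro i _
      exact ENNReal.mul_ne_top ENNReal.ofReal_ne_top (hFthbdd _)
  -- minimal and maximal ratios
  obtain ⟨rmin, hrmin0, hrmin1, hrminle⟩ :
      ∃ rmin : ℝ, 0 < rmin ∧ rmin < 1 ∧ ∀ i, rmin ≤ Φ.r i := by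
    obtain ⟨i0, -, hi0⟩ := Finset.exists_mem_eq_inf' (Finset.univ_nonempty) Φ.r
    exact ⟨_, hi0 ▸ Φ.r_pos i0, hi0 ▸ Φ.r_lt_one i0,
      fun i => Finset.inf'_le _ (Finset.mem_univ i)⟩
  obtain ⟨rmax, hrmax0, hrmax1, hrmaxle⟩ :
      ∃ rmax : ℝ, 0 < rmax ∧ rmax < 1 ∧ ∀ i, Φ.r i ≤ rmax := by
    obtain ⟨i0, -, hi0⟩ := Finset.exists_mem_eq_sup' (Finset.univ_nonempty) Φ.r
    exact ⟨_, hi0 ▸ Φ.r_pos i0, hi0 ▸ Φ.r_lt_one i0,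
      fun i => Finset.le_sup' _ (Finset.mem_univ i)⟩
  -- the similarity dimension
  obtain ⟨s, hs0, hssum⟩ : ∃ s : ℝ, 0 < s ∧ ∑ i, (Φ.r i : ℝ) ^ s = 1 := by
    have hGc : Continuous fun x : ℝ => ∑ i, (Φ.r i) ^ x := by
      apply continuous_finset_sum
      intro i _
      have h2 : Continuous fun x : ℝ => Real.exp (Real.log (Φ.r i) * x) := by fun_prop
      exact h2.congr fun x => (Real.rpow_def_of_pos (Φ.r_pos i) x).symm
    have hG0 : (∑ i, (Φ.r i : ℝ) ^ (0:ℝ)) = N := by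
      simp [Real.rpow_zero]
    have htend : Tendsto (fun x : ℝ => (N : ℝ) * rmax ^ x) atTop (𝓝 0) := by
      have h0 := tendsto_rpow_atTop_of_base_lt_one rmax (by linarith) hrmax1
      simpa using h0.const_mul (N:ℝ)
    obtain ⟨M, hM0, hM1⟩ : ∃ M : ℝ, 0 ≤ M ∧ (N : ℝ) * rmax ^ M < 1 := by
      have h1 : ∀ᶠ x : ℝ in atTop, (N : ℝ) * rmax ^ x < 1 :=
        htend.eventually_lt_const one_pos
      obtain ⟨M, hM⟩ := (h1.and (eventually_ge_atTop (0:ℝ))).exists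
      exact ⟨M, hM.2, hM.1⟩
    have hGM : (∑ i, (Φ.r i : ℝ) ^ M) < 1 := by
      calc (∑ i, (Φ.r i : ℝ) ^ M) ≤ ∑ _i : Fin N, rmax ^ M :=
            Finset.sum_le_sum (fun i _ =>
              Real.rpow_le_rpow (Φ.r_pos i).le (hrmaxle i) hM0)
        _ = (N : ℝ) * rmax ^ M := by
            simp [Finset.sum_const, Finset.card_univ, mul_comm]
        _ < 1 := hM1
    have hmem : (1:ℝ) ∈ Icc ((∑ i, (Φ.r i : ℝ) ^ M)) (∑ i, (Φ.r i : ℝ) ^ (0:ℝ)) := by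
      constructor
      · exact hGM.le
      · rw [hG0]
        exact_mod_cast le_trans (by norm_num) hN
    obtain ⟨s, hsmem, hseq⟩ := intermediate_value_Icc' hM0 hGc.continuousOn hmem
    have hseq' : (∑ i, (Φ.r i : ℝ) ^ s) = 1 := hseq
    refine ⟨s, ?_, hseq'⟩
    rcases eq_or_lt_of_le hsmem.1 with h | h
    · exfalso
      rw [← h] at hseq'
      rw [hG0] at hseq'
      have : (N : ℝ) = 1 := hseq'
      have : (2:ℝ) ≤ 1 := by
        calc (2:ℝ) ≤ (N:ℝ) := by exact_mod_cast hN
          _ = 1 := this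
      linarith
    · exact h
  -- lower bound for f
  obtain ⟨cl, η, hcl0, hη0, hLB⟩ :
      ∃ cl η : ℝ, 0 < cl ∧ 0 < η ∧ ∀ δ, 0 < δ → δ ≤ η → cl * δ ^ (1 - s) ≤ f δ := by
    obtain ⟨x0, hx0O, hx0F⟩ := hstrong
    obtain ⟨η, hη0, hball⟩ := Metric.isOpen_iff.1 hOopen x0 hx0O
    set cl : ℝ := 2 * (rmin * η) ^ s with hcl
    have hrmη : 0 < rmin * η := by positivity
    have hcl0 : 0 < cl := by positivity
    refine ⟨cl, η, hcl0, hη0, ?_⟩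
    -- base estimate : f δ ≥ 2 δ for 0 < δ ≤ η
    have hfb : ∀ δ, 0 < δ → δ ≤ η → 2 * δ ≤ f δ := by
      intro δ hδ hδη
      have hsub : ball x0 δ ⊆ Fth δ ∩ O := by
        intro y hy
        refine ⟨?_, hball (lt_of_lt_of_le hy hδη)⟩
        rw [hFthmem hδ.le]
        exact le_trans (infDist_le_dist_of_mem hx0F) (le_of_lt hy)
      have h1 : volume (ball x0 δ) ≤ volume (Fth δ ∩ O) := measure_mono hsub
      have h2 := ENNReal.toReal_mono
        (ne_top_of_le_ne_top (hFthbdd δ) (measure_mono inter_subset_left)) h1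
      rw [Real.volume_ball, ENNReal.toReal_ofReal (by positivity)] at h2
      linarith [h2]
    -- base case of the induction
    have hbase : ∀ δ, rmin * η < δ → δ ≤ η → cl * δ ^ (1 - s) ≤ f δ := by
      intro δ h1 h2
      have hδ0 : 0 < δ := lt_trans hrmη h1
      have key : cl * δ ^ (1 - s) ≤ 2 * δ := by
        have h3 : (rmin * η) ^ s ≤ δ ^ s :=
          Real.rpow_le_rpow hrmη.le h1.le hs0.le
        calc cl * δ ^ (1 - s) = 2 * ((rmin * η) ^ s * δ ^ (1 - s)) := by ring
          _ ≤ 2 * (δ ^ s * δ ^ (1 - s)) := by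
              have := mul_le_mul_of_nonneg_right h3
                (Real.rpow_nonneg hδ0.le (1 - s))
              linarith
          _ = 2 * δ := by
              rw [← Real.rpow_add hδ0]
              norm_num
      exact le_trans key (hfb δ hδ0 h2)
    have hind : ∀ n : ℕ, ∀ δ : ℝ, rmax ^ n * (rmin * η) < δ → δ ≤ η →
        cl * δ ^ (1 - s) ≤ f δ := by
      intro n
      induction n with
      | zero =>
        intro δ h1 h2
        rw [pow_zero, one_mul] at h1
        exact hbase δ h1 h2
      | succ n ih =>
        intro δ h1 h2
        by_cases hb : rmin * η < δ
        · exact hbase δ hb h2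
        · push_neg at hb
          have hδ0 : 0 < δ :=
            lt_of_le_of_lt (by positivity) h1
          have hstep : ∀ i : Fin N, cl * (δ / Φ.r i) ^ (1 - s) ≤ f (δ / Φ.r i) := by
            intro i
            have hri := Φ.r_pos i
            apply ih
            · rw [lt_div_iff₀ hri]
              calc rmax ^ n * (rmin * η) * Φ.r i ≤ rmax ^ n * (rmin * η) * rmax := by
                    have := hrmaxle i
                    have h4 : (0:ℝ) ≤ rmax ^ n * (rmin * η) := by positivity
                    nlinarith
                _ = rmax ^ (n+1) * (rmin * η) := by ring
                _ < δ := h1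
            · rw [div_le_iff₀ hri]
              calc δ ≤ rmin * η := hb
                _ ≤ Φ.r i * η := by nlinarith [hrminle i, hη0]
                _ = η * Φ.r i := by ring
          calc cl * δ ^ (1 - s) = ∑ i, Φ.r i * (cl * (δ / Φ.r i) ^ (1 - s)) := by
                have : ∀ i : Fin N, Φ.r i * (cl * (δ / Φ.r i) ^ (1 - s))
                    = cl * δ ^ (1 - s) * (Φ.r i) ^ s := by
                  intro i
                  have hri := Φ.r_pos i
                  rw [Real.div_rpow hδ0.le hri.le]
                  rw [show (Φ.r i : ℝ) ^ s = Φ.r i ^ (1:ℝ) / Φ.r i ^ (1 - s) by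
                    rw [← Real.rpow_sub hri]; norm_num]
                  rw [Real.rpow_one]
                  field_simp
                rw [Finset.sum_congr rfl (fun i _ => this i), ← Finset.mul_sum, hssum, mul_one]
            _ ≤ ∑ i, Φ.r i * f (δ / Φ.r i) :=
                Finset.sum_le_sum (fun i _ => mul_le_mul_of_nonneg_left (hstep i) (Φ.r_pos i).le)
            _ ≤ f δ := by
                have := hrenew δ hδ0
                have h5 : 0 ≤ (volume (Fth δ ∩ Γ)).toReal := ENNReal.toReal_nonneg
                linarith
    intro δ hδ0 hδη
    obtain ⟨n, hn⟩ := exists_pow_lt_of_lt_one (div_pos hδ0 hrmη) hrmax1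
    apply hind n δ _ hδη
    rw [← lt_div_iff₀ hrmη]
    exact hn
  -- the Minkowski dimension dominates the similarity dimension
  have hsD : s ≤ D := by
    have hlog : Tendsto Real.log (𝓝[>] (0:ℝ)) atBot := Real.tendsto_log_nhdsGT_zero
    have htend2 : Tendsto (fun ε : ℝ => s - Real.log cl / Real.log ε) (𝓝[>] 0) (𝓝 s) := by
      have hneg : Tendsto (fun ε : ℝ => -Real.log ε) (𝓝[>] (0:ℝ)) atTop := by
        exact tendsto_neg_atTop_iff.2 hlog
      have hdiv : Tendsto (fun ε : ℝ => Real.log cl / -Real.log ε) (𝓝[>] (0:ℝ)) (𝓝 0) :=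
        Tendsto.div_atTop tendsto_const_nhds hneg
      have heq : (fun ε : ℝ => Real.log cl / Real.log ε)
          = fun ε : ℝ => -(Real.log cl / -Real.log ε) := by
        funext ε
        rw [div_neg, neg_neg]
      have hdiv2 : Tendsto (fun ε : ℝ => Real.log cl / Real.log ε) (𝓝[>] (0:ℝ)) (𝓝 0) := by
        rw [heq]
        simpa using hdiv.neg
      simpa using (tendsto_const_nhds (x := s)).sub hdiv2
    refine le_of_tendsto_of_tendsto htend2 hdim ?_
    filter_upwards [Ioo_mem_nhdsGT (show (0:ℝ) < min η 1 by positivity)]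
    intro ε hε
    have hε0 : 0 < ε := hε.1
    have hεη : ε ≤ η := le_of_lt (lt_of_lt_of_le hε.2 (min_le_left _ _))
    have hε1 : ε < 1 := lt_of_lt_of_le hε.2 (min_le_right _ _)
    have hlogε : Real.log ε < 0 := Real.log_neg hε0 hε1
    set W : ℝ := (volume (cthickening ε F)).toReal with hW
    have hWf : f ε ≤ W := hfV ε
    have hWl : cl * ε ^ (1 - s) ≤ W := le_trans (hLB ε hε0 hεη) hWf
    have hWpos : 0 < W := lt_of_lt_of_le (by positivity) hWl
    have hlogV : Real.log cl + (1 - s) * Real.log ε ≤ Real.log W := by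
      have h1 : Real.log (cl * ε ^ (1 - s)) ≤ Real.log W :=
        Real.log_le_log (by positivity) hWl
      rw [Real.log_mul (ne_of_gt hcl0) (ne_of_gt (Real.rpow_pos_of_pos hε0 _)),
        Real.log_rpow hε0] at h1
      exact h1
    have hinv : (Real.log ε)⁻¹ < 0 := inv_neg''.2 hlogε
    have h6 : (1 - s) * Real.log ε ≤ Real.log W - Real.log cl := by linarith
    have h7 : (Real.log W - Real.log cl) * (Real.log ε)⁻¹
        ≤ ((1 - s) * Real.log ε) * (Real.log ε)⁻¹ :=
      mul_le_mul_of_nonpos_right h6 hinv.le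
    have h8 : ((1 - s) * Real.log ε) * (Real.log ε)⁻¹ = 1 - s := by
      field_simp [ne_of_lt hlogε]
    rw [h8] at h7
    have h9 : (Real.log W - Real.log cl) * (Real.log ε)⁻¹
        = Real.log W / Real.log ε - Real.log cl / Real.log ε := by
      rw [sub_mul]
      rw [div_eq_mul_inv, div_eq_mul_inv]
    rw [h9] at h7
    linarith
  have hs1 : s < 1 := lt_of_le_of_lt hsD hD
  -- upper bound for V on (0, B]
  have hUB : ∀ B, 0 < B → ∃ C, 0 < C ∧ ∀ δ, 0 < δ → δ ≤ B → V δ ≤ C * δ ^ (1 - s) := by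
    intro B hB0
    set K : ℝ := V B with hK
    have hK0 : 0 ≤ K := ENNReal.toReal_nonneg
    have hrB : 0 < rmin * B := by positivity
    set C : ℝ := K * (rmin * B) ^ (s - 1) + 1 with hC
    have hC0 : 0 < C := by positivity
    refine ⟨C, hC0, ?_⟩
    have hVmono : ∀ δ, 0 < δ → δ ≤ B → V δ ≤ K := by
      intro δ hδ0 hδB
      exact ENNReal.toReal_mono (hFthbdd B) (measure_mono (cthickening_mono hδB F))
    have hbase : ∀ δ, rmin * B < δ → δ ≤ B → V δ ≤ C * δ ^ (1 - s) := by
      intro δ h1 h2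
      have hδ0 : 0 < δ := lt_trans hrB h1
      have key : K ≤ C * δ ^ (1 - s) := by
        have h3 : (rmin * B) ^ (1 - s) ≤ δ ^ (1 - s) :=
          Real.rpow_le_rpow hrB.le h1.le (by linarith)
        have h4 : K * ((rmin * B) ^ (s - 1) * (rmin * B) ^ (1 - s)) = K := by
          rw [← Real.rpow_add hrB]
          norm_num
        have h5 : 0 ≤ (rmin * B) ^ (s - 1) := Real.rpow_nonneg hrB.le _
        calc K = K * (rmin * B) ^ (s - 1) * (rmin * B) ^ (1 - s) := by
              rw [mul_assoc, h4]
          _ ≤ K * (rmin * B) ^ (s - 1) * δ ^ (1 - s) := by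
              exact mul_le_mul_of_nonneg_left h3 (by positivity)
          _ ≤ C * δ ^ (1 - s) := by
              have h6 : 0 ≤ δ ^ (1 - s) := Real.rpow_nonneg hδ0.le _
              have h7 : K * (rmin * B) ^ (s - 1) ≤ C := by
                rw [hC]; linarith
              exact mul_le_mul_of_nonneg_right h7 h6
      exact le_trans (hVmono δ hδ0 h2) key
    have hind : ∀ n : ℕ, ∀ δ : ℝ, rmax ^ n * (rmin * B) < δ → δ ≤ B →
        V δ ≤ C * δ ^ (1 - s) := by
      intro n
      induction n with
      | zero =>
        intro δ h1 h2
        rw [pow_zero, one_mul] at h1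
        exact hbase δ h1 h2
      | succ n ih =>
        intro δ h1 h2
        by_cases hb : rmin * B < δ
        · exact hbase δ hb h2
        · push_neg at hb
          have hδ0 : 0 < δ := lt_of_le_of_lt (by positivity) h1
          have hstep : ∀ i : Fin N, V (δ / Φ.r i) ≤ C * (δ / Φ.r i) ^ (1 - s) := by
            intro i
            have hri := Φ.r_pos i
            apply ih
            · rw [lt_div_iff₀ hri]
              calc rmax ^ n * (rmin * B) * Φ.r i ≤ rmax ^ n * (rmin * B) * rmax := by
                    have := hrmaxle i
                    have h4 : (0:ℝ) ≤ rmax ^ n * (rmin * B) := by positivity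
                    nlinarith
                _ = rmax ^ (n+1) * (rmin * B) := by ring
                _ < δ := h1
            · rw [div_le_iff₀ hri]
              calc δ ≤ rmin * B := hb
                _ ≤ Φ.r i * B := by nlinarith [hrminle i, hB0]
                _ = B * Φ.r i := by ring
          calc V δ ≤ ∑ i, Φ.r i * V (δ / Φ.r i) := hVsub δ hδ0
            _ ≤ ∑ i, Φ.r i * (C * (δ / Φ.r i) ^ (1 - s)) :=
                Finset.sum_le_sum (fun i _ =>
                  mul_le_mul_of_nonneg_left (hstep i) (Φ.r_pos i).le)
            _ = C * δ ^ (1 - s) := by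
                have : ∀ i : Fin N, Φ.r i * (C * (δ / Φ.r i) ^ (1 - s))
                    = C * δ ^ (1 - s) * (Φ.r i) ^ s := by
                  intro i
                  have hri := Φ.r_pos i
                  rw [Real.div_rpow hδ0.le hri.le]
                  rw [show (Φ.r i : ℝ) ^ s = Φ.r i ^ (1:ℝ) / Φ.r i ^ (1 - s) by
                    rw [← Real.rpow_sub hri]; norm_num]
                  rw [Real.rpow_one]
                  field_simp
                rw [Finset.sum_congr rfl (fun i _ => this i), ← Finset.mul_sum, hssum, mul_one]
    intro δ hδ0 hδB
    obtain ⟨n, hn⟩ := exists_pow_lt_of_lt_one (div_pos hδ0 hrB) hrmax1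
    apply hind n δ _ hδB
    rw [← lt_div_iff₀ hrB]
    exact hn
  -- main case split on g
  by_cases hg : 0 < g
  · -- the series at scale g with exponent s
    set M : ℕ := Finset.univ.sup m with hM
    have hmM : ∀ i, m i ≤ M := fun i => Finset.le_sup (Finset.mem_univ i)
    have hM1 : 1 ≤ M := le_trans (hm1 (Classical.arbitrary (Fin N))) (hmM _)
    obtain ⟨C, hC0, hCb⟩ := hUB (ρ ^ (-(M:ℝ)) * g) (by positivity)
    set U : ℝ := C * g ^ (1 - s) with hU
    have hU0 : 0 < U := by positivity
    set d : ℕ → ℝ := fun j => ρ ^ ((j : ℝ) - M) * g with hd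
    set v : ℕ → ℝ := fun j => ρ ^ (((j : ℝ) - M) * (s - 1)) * f (d j) with hv
    have hd0 : ∀ j, 0 < d j := by
      intro j
      have := Real.rpow_pos_of_pos hρ0 ((j : ℝ) - M)
      positivity
    have hv_nonneg : ∀ j, 0 ≤ v j := by
      intro j
      have := Real.rpow_nonneg hρ0.le (((j : ℝ) - M) * (s - 1))
      exact mul_nonneg this (hf_nonneg _)
    have hvU : ∀ j, v j ≤ U := by
      intro j
      have hxM : -(M:ℝ) ≤ (j:ℝ) - M := by
        have : (0:ℝ) ≤ (j:ℝ) := Nat.cast_nonneg j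
        linarith
      have hdB : d j ≤ ρ ^ (-(M:ℝ)) * g := by
        have h1 : ρ ^ ((j:ℝ) - M) ≤ ρ ^ (-(M:ℝ)) :=
          Real.rpow_le_rpow_of_exponent_ge hρ0 hρ1.le hxM
        have := mul_le_mul_of_nonneg_right h1 hg.le
        simpa [hd] using this
      have hfd : f (d j) ≤ C * (d j) ^ (1 - s) :=
        le_trans (hfV _) (hCb _ (hd0 j) hdB)
      have hvle : v j ≤ ρ ^ (((j:ℝ) - M) * (s - 1)) * (C * (d j) ^ (1 - s)) :=
        mul_le_mul_of_nonneg_left hfd (Real.rpow_nonneg hρ0.le _)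
      have hcompute : ρ ^ (((j:ℝ) - M) * (s - 1)) * (C * (d j) ^ (1 - s)) = U := by
        have hdj : d j = ρ ^ ((j:ℝ) - M) * g := rfl
        rw [hdj, Real.mul_rpow (Real.rpow_nonneg hρ0.le _) hg.le,
          ← Real.rpow_mul hρ0.le]
        have hone : ρ ^ (((j:ℝ) - M) * (s - 1)) * ρ ^ (((j:ℝ) - M) * (1 - s)) = 1 := by
          rw [← Real.rpow_add hρ0,
            show ((j:ℝ) - M) * (s - 1) + ((j:ℝ) - M) * (1 - s) = 0 by ring,
            Real.rpow_zero]
        calc ρ ^ (((j:ℝ) - M) * (s - 1)) * (C * (ρ ^ (((j:ℝ) - M) * (1 - s)) * g ^ (1 - s)))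
            = (ρ ^ (((j:ℝ) - M) * (s - 1)) * ρ ^ (((j:ℝ) - M) * (1 - s))) * (C * g ^ (1 - s)) := by
              ring
          _ = C * g ^ (1 - s) := by rw [hone, one_mul]
      rw [hcompute] at hvle
      exact hvle
    set aseq : ℕ → ℝ := fun ℓ =>
      ρ ^ ((ℓ : ℝ) * (s - 1)) * (volume (Fth (ρ ^ ℓ * g) ∩ Γ)).toReal with haseq
    have haseq_nonneg : ∀ ℓ, 0 ≤ aseq ℓ := fun ℓ =>
      mul_nonneg (Real.rpow_nonneg hρ0.le _) ENNReal.toReal_nonneg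
    -- index bookkeeping
    have hcastM : ∀ ℓ : ℕ, ((ℓ + M : ℕ) : ℝ) - M = (ℓ : ℝ) := by
      intro ℓ; push_cast; ring
    have hcastMi : ∀ (ℓ : ℕ) (i : Fin N), ((ℓ + M - m i : ℕ) : ℝ) - M = (ℓ : ℝ) - m i := by
      intro ℓ i
      have h1 : m i ≤ ℓ + M := le_trans (hmM i) (Nat.le_add_left M ℓ)
      rw [Nat.cast_sub h1]
      push_cast; ring
    have hvM : ∀ ℓ : ℕ, v (ℓ + M) = ρ ^ ((ℓ:ℝ) * (s - 1)) * f (ρ ^ ℓ * g) := by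
      intro ℓ
      have hd1 : d (ℓ + M) = ρ ^ ℓ * g := by
        rw [hd]
        simp only []
        rw [hcastM ℓ, Real.rpow_natCast]
      rw [hv]
      simp only []
      rw [hcastM ℓ, hd1]
    have hvMi : ∀ (ℓ : ℕ) (i : Fin N),
        v (ℓ + M - m i) = ρ ^ (((ℓ:ℝ) - m i) * (s - 1)) * f ((ρ ^ ℓ * g) / Φ.r i) := by
      intro ℓ i
      have hd1 : d (ℓ + M - m i) = (ρ ^ ℓ * g) / Φ.r i := by
        rw [hd]
        simp only []
        rw [hcastMi ℓ i, hmρ i, Real.rpow_sub hρ0, Real.rpow_natCast, Real.rpow_natCast]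
        ring
      rw [hv]
      simp only []
      rw [hcastMi ℓ i, hd1]
    -- the telescoping inequality
    have haineq : ∀ ℓ : ℕ,
        aseq ℓ + ∑ i, (Φ.r i) ^ s * v (ℓ + M - m i) ≤ v (ℓ + M) := by
      intro ℓ
      have hδ0 : 0 < ρ ^ ℓ * g := by positivity
      have hr := hrenew (ρ ^ ℓ * g) hδ0
      have hP0 : (0:ℝ) ≤ ρ ^ ((ℓ:ℝ) * (s - 1)) := Real.rpow_nonneg hρ0.le _
      have hmul := mul_le_mul_of_nonneg_left hr hP0
      rw [mul_add, Finset.mul_sum] at hmul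
      rw [hvM ℓ]
      have hterm : ∀ i : Fin N,
          ρ ^ ((ℓ:ℝ) * (s - 1)) * (Φ.r i * f ((ρ ^ ℓ * g) / Φ.r i))
          = (Φ.r i) ^ s * v (ℓ + M - m i) := by
        intro i
        rw [hvMi ℓ i]
        have hcoef : ρ ^ ((ℓ:ℝ) * (s - 1)) * Φ.r i
            = (Φ.r i) ^ s * ρ ^ (((ℓ:ℝ) - m i) * (s - 1)) := by
          rw [hmρ i, ← Real.rpow_natCast ρ (m i), ← Real.rpow_mul hρ0.le,
            ← Real.rpow_add hρ0, ← Real.rpow_add hρ0]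
          congr 1
          ring
        calc ρ ^ ((ℓ:ℝ) * (s - 1)) * (Φ.r i * f ((ρ ^ ℓ * g) / Φ.r i))
            = (ρ ^ ((ℓ:ℝ) * (s - 1)) * Φ.r i) * f ((ρ ^ ℓ * g) / Φ.r i) := by ring
          _ = ((Φ.r i) ^ s * ρ ^ (((ℓ:ℝ) - m i) * (s - 1))) * f ((ρ ^ ℓ * g) / Φ.r i) := by
              rw [hcoef]
          _ = (Φ.r i) ^ s * (ρ ^ (((ℓ:ℝ) - m i) * (s - 1)) * f ((ρ ^ ℓ * g) / Φ.r i)) := by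
              ring
      calc aseq ℓ + ∑ i, (Φ.r i) ^ s * v (ℓ + M - m i)
          = ρ ^ ((ℓ:ℝ) * (s - 1)) * (volume (Fth (ρ ^ ℓ * g) ∩ Γ)).toReal
            + ∑ i, ρ ^ ((ℓ:ℝ) * (s - 1)) * (Φ.r i * f ((ρ ^ ℓ * g) / Φ.r i)) := by
            rw [haseq]
            simp only []
            congr 1
            exact (Finset.sum_congr rfl (fun i _ => (hterm i).symm))
        _ ≤ ρ ^ ((ℓ:ℝ) * (s - 1)) * f (ρ ^ ℓ * g) := hmul
    -- bounded partial sums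
    have hpartial : ∀ L : ℕ, ∑ ℓ ∈ Finset.range L, aseq ℓ ≤ (M:ℝ) * U := by
      intro L
      have h1 : ∑ ℓ ∈ Finset.range L, aseq ℓ
          ≤ ∑ ℓ ∈ Finset.range L, (v (ℓ + M) - ∑ i, (Φ.r i) ^ s * v (ℓ + M - m i)) :=
        Finset.sum_le_sum (fun ℓ _ => by linarith [haineq ℓ])
      have hshift : ∀ i : Fin N,
          ∑ ℓ ∈ Finset.range L, v (ℓ + M)
            - ∑ ℓ ∈ Finset.range L, v (ℓ + M - m i) ≤ (M:ℝ) * U := by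
        intro i
        set t : ℕ := M - m i with ht
        have htM : t ≤ M := Nat.sub_le _ _
        have hidx : ∀ ℓ : ℕ, ℓ + M - m i = ℓ + t := by
          intro ℓ
          have := hmM i
          omega
        have hA : ∑ ℓ ∈ Finset.range L, v (ℓ + M) = ∑ j ∈ Finset.Ico M (M + L), v j := by
          rw [Finset.sum_Ico_eq_sum_range]
          simp only [Nat.add_sub_cancel_left]
          exact Finset.sum_congr rfl (fun ℓ _ => by rw [Nat.add_comm])
        have hB : ∑ ℓ ∈ Finset.range L, v (ℓ + M - m i)
            = ∑ j ∈ Finset.Ico t (t + L), v j := by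
          rw [Finset.sum_Ico_eq_sum_range]
          simp only [Nat.add_sub_cancel_left]
          exact Finset.sum_congr rfl (fun ℓ _ => by rw [hidx ℓ, Nat.add_comm])
        rw [hA, hB]
        have hsub : Finset.Ico M (M + L) ⊆ Finset.Ico t (M + L) := by
          apply Finset.Ico_subset_Ico htM (le_refl _)
        have h2 : ∑ j ∈ Finset.Ico M (M + L), v j ≤ ∑ j ∈ Finset.Ico t (M + L), v j :=
          Finset.sum_le_sum_of_subset_of_nonneg hsub (fun j _ _ => hv_nonneg j)
        have h3 : ∑ j ∈ Finset.Ico t (M + L), v j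
            = ∑ j ∈ Finset.Ico t (t + L), v j + ∑ j ∈ Finset.Ico (t + L) (M + L), v j := by
          rw [Finset.sum_Ico_consecutive]
          · omega
          · omega
        have h4 : ∑ j ∈ Finset.Ico (t + L) (M + L), v j ≤ ((M - t : ℕ) : ℝ) * U := by
          have hcard : (Finset.Ico (t + L) (M + L)).card = M - t := by
            rw [Nat.card_Ico]
            omega
          calc ∑ j ∈ Finset.Ico (t + L) (M + L), v j
              ≤ (Finset.Ico (t + L) (M + L)).card • U :=
                Finset.sum_le_card_nsmul _ _ _ (fun j _ => hvU j)
            _ = ((M - t : ℕ) : ℝ) * U := by rw [hcard, nsmul_eq_mul]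
        have h5 : ((M - t : ℕ) : ℝ) * U ≤ (M:ℝ) * U := by
          have : ((M - t : ℕ) : ℝ) ≤ (M : ℝ) := by
            exact_mod_cast Nat.sub_le M t
          exact mul_le_mul_of_nonneg_right this hU0.le
        linarith
      calc ∑ ℓ ∈ Finset.range L, aseq ℓ
          ≤ ∑ ℓ ∈ Finset.range L, (v (ℓ + M) - ∑ i, (Φ.r i) ^ s * v (ℓ + M - m i)) := h1
        _ = ∑ ℓ ∈ Finset.range L, v (ℓ + M)
            - ∑ i, (Φ.r i) ^ s * ∑ ℓ ∈ Finset.range L, v (ℓ + M - m i) := by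
            rw [Finset.sum_sub_distrib]
            congr 1
            rw [Finset.sum_comm]
            exact Finset.sum_congr rfl (fun i _ => (Finset.mul_sum _ _ _).symm)
        _ = ∑ i, (Φ.r i) ^ s *
              (∑ ℓ ∈ Finset.range L, v (ℓ + M) - ∑ ℓ ∈ Finset.range L, v (ℓ + M - m i)) := by
            rw [Finset.sum_congr rfl
              (fun (i : Fin N) (_ : i ∈ Finset.univ) => mul_sub ((Φ.r i) ^ s)
                (∑ ℓ ∈ Finset.range L, v (ℓ + M)) (∑ ℓ ∈ Finset.range L, v (ℓ + M - m i))),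
              Finset.sum_sub_distrib, ← Finset.sum_mul, hssum, one_mul]
        _ ≤ ∑ i, (Φ.r i) ^ s * ((M:ℝ) * U) :=
            Finset.sum_le_sum (fun i _ =>
              mul_le_mul_of_nonneg_left (hshift i) (Real.rpow_nonneg (Φ.r_pos i).le s))
        _ = (M:ℝ) * U := by rw [← Finset.sum_mul, hssum, one_mul]
    have hsummable : Summable aseq := summable_of_sum_range_le haseq_nonneg hpartial
    have hterm_le : ∀ ε ∈ Ioc (ρ * g) g, ∀ ℓ : ℕ, term ℓ ε ≤ aseq ℓ := by
      intro ε hε ℓ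
      have hfin : volume (Fth (ρ ^ ℓ * g) ∩ Γ) ≠ ⊤ :=
        ne_top_of_le_ne_top (hFthbdd _) (measure_mono inter_subset_left)
      have hvol_le : (volume (cthickening (ρ ^ ℓ * ε) F ∩ Γ)).toReal
          ≤ (volume (Fth (ρ ^ ℓ * g) ∩ Γ)).toReal := by
        apply ENNReal.toReal_mono hfin
        apply measure_mono
        apply inter_subset_inter_left
        exact cthickening_mono (by nlinarith [pow_pos hρ0 ℓ, hε.2]) F
      have hrpow_le : ρ ^ ((ℓ:ℝ) * (D - 1)) ≤ ρ ^ ((ℓ:ℝ) * (s - 1)) := by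
        apply Real.rpow_le_rpow_of_exponent_ge hρ0 hρ1.le
        have h0ℓ : (0:ℝ) ≤ (ℓ:ℝ) := Nat.cast_nonneg ℓ
        nlinarith [hsD]
      calc term ℓ ε
          = ρ ^ ((ℓ:ℝ) * (D - 1)) * (volume (cthickening (ρ ^ ℓ * ε) F ∩ Γ)).toReal := rfl
        _ ≤ ρ ^ ((ℓ:ℝ) * (s - 1)) * (volume (Fth (ρ ^ ℓ * g) ∩ Γ)).toReal :=
            mul_le_mul hrpow_le hvol_le ENNReal.toReal_nonneg (Real.rpow_nonneg hρ0.le _)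
        _ = aseq ℓ := rfl
    have hterm_nonneg : ∀ (ε : ℝ) (ℓ : ℕ), 0 ≤ term ℓ ε := fun ε ℓ =>
      mul_nonneg (Real.rpow_nonneg hρ0.le _) ENNReal.toReal_nonneg
    constructor
    · intro ε hε
      exact Summable.of_nonneg_of_le (fun ℓ => hterm_nonneg ε ℓ) (hterm_le ε hε) hsummable
    · intro δ hδ
      obtain ⟨n, hn⟩ : ∃ n : ℕ, ∑' ℓ, aseq (ℓ + n) < δ := by
        have htt : Tendsto (fun n => ∑ i ∈ Finset.range n, aseq i) atTop (𝓝 (∑' i, aseq i)) :=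
          hsummable.hasSum.tendsto_sum_nat
        have h1 : ∀ᶠ n in atTop, |∑ i ∈ Finset.range n, aseq i - ∑' i, aseq i| < δ := by
          obtain ⟨n0, hn0⟩ := Metric.tendsto_atTop.1 htt δ hδ
          filter_upwards [eventually_ge_atTop n0] with n hn
          have := hn0 n hn
          rwa [Real.dist_eq] at this
        obtain ⟨n, hn⟩ := h1.exists
        refine ⟨n, ?_⟩
        have h2 : ∑ i ∈ Finset.range n, aseq i + ∑' ℓ, aseq (ℓ + n) = ∑' i, aseq i :=
          hsummable.sum_add_tsum_nat_add n
        have h3 := abs_lt.1 hn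
        linarith [h3.1, h3.2]
      refine ⟨n, ?_⟩
      intro ε hε
      have hsum1 : Summable fun ℓ => aseq (ℓ + n) := (summable_nat_add_iff n).2 hsummable
      have hsum2 : Summable fun ℓ => term (ℓ + n) ε :=
        Summable.of_nonneg_of_le (fun ℓ => hterm_nonneg ε _) (fun ℓ => hterm_le ε hε _) hsum1
      calc (∑' ℓ, term (ℓ + n) ε) ≤ ∑' ℓ, aseq (ℓ + n) :=
            Summable.tsum_le_tsum (fun ℓ => hterm_le ε hε _) hsum2 hsum1
        _ < δ := hn
  · -- vacuous case : the interval (ρ g, g] is empty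
    have hempty : ∀ ε : ℝ, ε ∉ Ioc (ρ * g) g := by
      intro ε hε
      have h1 : ρ * g < ε := hε.1
      have h2 : ε ≤ g := hε.2
      push_neg at hg
      nlinarith
    constructor
    · intro ε hε
      exact absurd hε (hempty ε)
    · intro δ hδ
      exact ⟨0, fun ε hε => absurd hε (hempty ε)⟩
end

section
/- Let Φ be an IFS on ℝ satisfying the open set condition whose self-similar set F is nontrivial (Minkowski dimension < 1), and let U be a compatible feasible open set for Φ (i.e. ∂U ⊆ F). Set Γ = U \ ΦU and G = U \ closure(ΦU). Then Γ \ G ⊆ F and λ(Γ \ G) = 0; consequently λ(F_t ∩ Γ) = λ(F_t ∩ G) for every t > 0. -/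
open Set Filter MeasureTheory Metric Topology

lemma ifs_homeo {N : ℕ} (Φ : IFS N) (i : Fin N) :
    ∃ h : ℝ ≃ₜ ℝ, Φ.φ i = ⇑h := by
  set f := Φ.φ i with hf
  have sq : ∀ x y, (f x - f y)^2 = (Φ.r i)^2 * (x - y)^2 := by
    intro x y
    have h := Φ.similar i x y
    have h2 := congrArg (· ^ 2) h
    simpa [sq_abs, mul_pow] using h2
  set b := f 1 - f 0 with hb
  have hbne : b ≠ 0 := by
    intro h
    have h1 := sq 1 0
    have := Φ.r_pos i
    rw [← hb, h] at h1
    nlinarith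
  have key : ∀ x, f x = f 0 + b * x := by
    intro x
    have h1 := sq x 0
    have h2 := sq x 1
    have h3 := sq 1 0
    have hbmul : b * f x = b * (f 0 + b * x) := by ring_nf; nlinarith [h1, h2, h3]
    exact mul_left_cancel₀ hbne hbmul
  exact ⟨(Homeomorph.mulLeft₀ b hbne).trans (Homeomorph.addLeft (f 0)),
    funext fun x => key x⟩

lemma attractor_volume_zero {F : Set ℝ} {D : ℝ} (hFc : IsCompact F)
    (hdim : HasMinkowskiDim F D) (hD : D < 1) : volume F = 0 := by
  set c := (1 - D) / 2 with hc
  have hcpos : 0 < c := by rw [hc]; linarith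
  have hev : ∀ᶠ ε in 𝓝[>] (0:ℝ),
      (volume F).toReal ≤ Real.exp (c * Real.log ε) := by
    have h1 : ∀ᶠ ε in 𝓝[>] (0:ℝ),
        dist (1 - Real.log (volume (Metric.cthickening ε F)).toReal / Real.log ε) D < c :=
      Metric.tendsto_nhds.mp hdim c hcpos
    have h2 : Ioo (0:ℝ) 1 ∈ 𝓝[>] (0:ℝ) :=
      Ioo_mem_nhdsGT_of_mem ⟨le_refl 0, one_pos⟩
    filter_upwards [h1, h2] with ε hdist hε
    set v := (volume (Metric.cthickening ε F)).toReal with hv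
    have hlogε : Real.log ε < 0 := Real.log_neg hε.1 hε.2
    have hgt : c < Real.log v / Real.log ε := by
      rw [Real.dist_eq, abs_lt] at hdist
      have := hdist.2
      rw [hc]; linarith [hdist.2]
    have hlogv : Real.log v < c * Real.log ε := by
      have h3 : (Real.log v / Real.log ε) * Real.log ε < c * Real.log ε :=
        mul_lt_mul_of_neg_right hgt hlogε
      rwa [div_mul_cancel₀ _ (ne_of_lt hlogε)] at h3
    have hvle : v ≤ Real.exp (c * Real.log ε) := by
      rcases le_or_gt v 0 with h | h
      · exact h.trans (Real.exp_pos _).le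
      · rw [← Real.exp_log h]; exact (Real.exp_lt_exp.mpr hlogv).le
    refine le_trans ?_ hvle
    have hfin : volume (Metric.cthickening ε F) ≠ ⊤ :=
      (hFc.cthickening).measure_lt_top.ne
    exact ENNReal.toReal_mono hfin (measure_mono (self_subset_cthickening F))
  have hlim : Tendsto (fun ε : ℝ => Real.exp (c * Real.log ε)) (𝓝[>] (0:ℝ)) (𝓝 0) := by
    apply Real.tendsto_exp_atBot.comp
    exact (Real.tendsto_log_nhdsGT_zero).const_mul_atBot hcpos
  have hle0 : (volume F).toReal ≤ 0 := ge_of_tendsto hlim hev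
  have h0 : (volume F).toReal = 0 := le_antisymm hle0 ENNReal.toReal_nonneg
  rcases (ENNReal.toReal_eq_zero_iff _).mp h0 with h | h
  · exact h
  · exact absurd h hFc.measure_lt_top.ne

/-- For a compatible feasible open set `U` of an OSC-IFS with
nontrivial attractor `F`, and `Γ = U \ ΦU`, `G = U \ closure(ΦU)`, one has
`Γ \ G ⊆ F`, `λ(Γ \ G) = 0` and `λ(F_t ∩ Γ) = λ(F_t ∩ G)` for every `t > 0`. -/
theorem gamma_diff_G_null {N : ℕ} (hN : 2 ≤ N) (Φ : IFS N) (F U : Set ℝ)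
    (D : ℝ) (hOSC : Φ.OSC) (hF : Φ.IsAttractor F) (hdim : HasMinkowskiDim F D)
    (hD : D < 1) (hfeas : Φ.Feasible U) (hcomp : frontier U ⊆ F) :
    let Γ : Set ℝ := U \ Φ.map U
    let G : Set ℝ := U \ closure (Φ.map U)
    Γ \ G ⊆ F ∧ volume (Γ \ G) = 0 ∧
      ∀ t > (0:ℝ), volume (Metric.cthickening t F ∩ Γ) =
        volume (Metric.cthickening t F ∩ G) := by
  intro Γ G
  have hUopen : IsOpen U := hfeas.2.1
  -- Γ \ G ⊆ F
  have hsub : Γ \ G ⊆ F := by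
    intro x hx
    obtain ⟨⟨hxU, hxn⟩, hxG⟩ := hx
    have hxcl : x ∈ closure (Φ.map U) := by
      by_contra h
      exact hxG ⟨hxU, h⟩
    -- closure of finite union
    have hcl : closure (Φ.map U) ⊆ ⋃ i, closure (Φ.φ i '' U) := by
      apply closure_minimal
      · exact iUnion_mono fun i => subset_closure
      · exact isClosed_iUnion_of_finite fun i => isClosed_closure
    obtain ⟨_, ⟨i, rfl⟩, hxi⟩ := hcl hxcl
    have hxi2 : x ∈ closure (Φ.φ i '' U) := hxi
    obtain ⟨h, hh⟩ := ifs_homeo Φ i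
    rw [hh, ← h.image_closure] at hxi2
    obtain ⟨y, hy, rfl⟩ := hxi2
    have hyU : y ∉ U := by
      intro hyU
      exact hxn (mem_iUnion.mpr ⟨i, ⟨y, hyU, by rw [hh]⟩⟩)
    have hyF : y ∈ F := by
      apply hcomp
      rw [hUopen.frontier_eq]
      exact ⟨hy, hyU⟩
    have : h y ∈ Φ.map F := mem_iUnion.mpr ⟨i, ⟨y, hyF, by rw [hh]⟩⟩
    rw [hF.2.2] at this
    exact this
  have hFnull : volume F = 0 := attractor_volume_zero hF.2.1 hdim hD
  have hnull : volume (Γ \ G) = 0 := measure_mono_null hsub hFnull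
  refine ⟨hsub, hnull, fun t ht => ?_⟩
  have hGΓ : G ⊆ Γ := fun x hx => ⟨hx.1, fun h => hx.2 (subset_closure h)⟩
  apply le_antisymm
  · calc volume (Metric.cthickening t F ∩ Γ)
        ≤ volume ((Metric.cthickening t F ∩ G) ∪ (Γ \ G)) := by
          apply measure_mono
          rintro x ⟨hxt, hxΓ⟩
          by_cases hx : x ∈ G
          · exact Or.inl ⟨hxt, hx⟩
          · exact Or.inr ⟨hxΓ, hx⟩
      _ ≤ volume (Metric.cthickening t F ∩ G) + volume (Γ \ G) := measure_union_le _ _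
      _ = volume (Metric.cthickening t F ∩ G) := by rw [hnull, add_zero]
  · exact measure_mono (inter_subset_inter_right _ hGΓ)
end

section
/- Define φ_1, φ_2, φ_3 : ℝ → ℝ by φ_1(x) = x/4, φ_2(x) = (x+1)/4, φ_3(x) = (x+6)/4 and let Φ = {φ_1, φ_2, φ_3}. The self-similar set F of Φ satisfies F ⊆ [0, 2] with 0, 2 ∈ F, so the interior of the convex hull of F is I = (0, 2). Then for every m ∈ ℕ₀ one has φ_1(Φ^m I) ∩ φ_2(Φ^m I) ≠ ∅; in particular, Φ^m I is not a feasible open set for Φ for any m ∈ ℕ₀. -/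
open Set Filter MeasureTheory Metric Topology

/-- For the IFS `φ₁(x) = x/4`, `φ₂(x) = (x+1)/4`, `φ₃(x) = (x+6)/4`
with attractor `F`, one has `F ⊆ [0,2]`, `0, 2 ∈ F` (so the interior of the
convex hull of `F` is `I = (0,2)`), and for every `m ∈ ℕ₀` the sets
`φ₁(Φ^m I)` and `φ₂(Φ^m I)` intersect; in particular, no `Φ^m I` is a feasible
open set for `Φ`. -/
theorem example_iterates_not_feasible (Φ : IFS 3) (F : Set ℝ)
    (h0 : Φ.φ 0 = fun x => x / 4) (h1 : Φ.φ 1 = fun x => (x + 1) / 4)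
    (h2 : Φ.φ 2 = fun x => (x + 6) / 4) (hF : Φ.IsAttractor F) :
    F ⊆ Set.Icc 0 2 ∧ (0:ℝ) ∈ F ∧ (2:ℝ) ∈ F ∧
      interior (convexHull ℝ F) = Set.Ioo 0 2 ∧
      (∀ m : ℕ,
        (Φ.φ 0 '' (Φ.map^[m] (Set.Ioo 0 2)) ∩
          Φ.φ 1 '' (Φ.map^[m] (Set.Ioo 0 2))).Nonempty) ∧
      ∀ m : ℕ, ¬ Φ.Feasible (Φ.map^[m] (Set.Ioo 0 2)) := by
  obtain ⟨hFne, hFc, hFmap⟩ := hF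
  have hbddA : BddAbove F := hFc.bddAbove
  have hbddB : BddBelow F := hFc.bddBelow
  have hMF : sSup F ∈ F := hFc.sSup_mem hFne
  have hmF : sInf F ∈ F := hFc.sInf_mem hFne
  have key : ∀ x ∈ F, ∃ y ∈ F, ∃ i : Fin 3, Φ.φ i y = x := by
    intro x hx
    rw [← hFmap] at hx
    simp only [IFS.map, mem_iUnion, mem_image] at hx
    obtain ⟨i, y, hy, hxy⟩ := hx
    exact ⟨y, hy, i, hxy⟩
  have hic : ∀ i : Fin 3, i = 0 ∨ i = 1 ∨ i = 2 := by decide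
  have himg : ∀ i : Fin 3, ∀ x ∈ F, Φ.φ i x ∈ F := by
    intro i x hx
    rw [← hFmap]
    exact mem_iUnion.2 ⟨i, mem_image_of_mem _ hx⟩
  have hM2 : sSup F ≤ 2 := by
    obtain ⟨y, hy, i, hi⟩ := key _ hMF
    have hyM : y ≤ sSup F := le_csSup hbddA hy
    have : sSup F ≤ (y + 6) / 4 := by
      rcases hic i with rfl | rfl | rfl <;> simp only [h0, h1, h2] at hi <;> linarith
    linarith
  have hm0 : 0 ≤ sInf F := by
    obtain ⟨y, hy, i, hi⟩ := key _ hmF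
    have hym : sInf F ≤ y := csInf_le hbddB hy
    have : y / 4 ≤ sInf F := by
      rcases hic i with rfl | rfl | rfl <;> simp only [h0, h1, h2] at hi <;> linarith
    linarith
  have h0F : (0:ℝ) ∈ F := by
    have h := himg 0 _ hmF
    rw [h0] at h
    have h' : sInf F ≤ sInf F / 4 := csInf_le hbddB h
    have : sInf F = 0 := le_antisymm (by linarith) hm0
    rwa [← this]
  have h2F : (2:ℝ) ∈ F := by
    have h := himg 2 _ hMF
    rw [h2] at h
    have h' : (sSup F + 6) / 4 ≤ sSup F := le_csSup hbddA h
    have : sSup F = 2 := le_antisymm hM2 (by linarith)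
    rwa [← this]
  have hsub : F ⊆ Set.Icc 0 2 := by
    intro x hx
    exact ⟨le_trans hm0 (csInf_le hbddB hx), le_trans (le_csSup hbddA hx) hM2⟩
  have hhull : convexHull ℝ F = Set.Icc 0 2 := by
    apply subset_antisymm
    · exact convexHull_min hsub (convex_Icc 0 2)
    · rw [← segment_eq_Icc (by norm_num : (0:ℝ) ≤ 2)]
      exact segment_subset_convexHull h0F h2F
  have hpair : ∀ k : ℕ, ∃ u : ℝ,
      u ∈ Φ.map^[k] (Set.Ioo 0 2) ∧ u + 1 ∈ Φ.map^[k] (Set.Ioo 0 2) := by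
    intro k
    induction k with
    | zero =>
      refine ⟨1/2, ?_, ?_⟩ <;> simp <;> norm_num
    | succ n ih =>
      obtain ⟨u, hu, hu1⟩ := ih
      refine ⟨(u + 2) / 4, ?_, ?_⟩
      · rw [Function.iterate_succ_apply']
        refine mem_iUnion.2 ⟨1, ⟨u + 1, hu1, ?_⟩⟩
        simp only [h1]; ring
      · rw [Function.iterate_succ_apply']
        refine mem_iUnion.2 ⟨2, ⟨u, hu, ?_⟩⟩
        simp only [h2]; ring
  have hinter : ∀ k : ℕ,
      (Φ.φ 0 '' (Φ.map^[k] (Set.Ioo 0 2)) ∩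
        Φ.φ 1 '' (Φ.map^[k] (Set.Ioo 0 2))).Nonempty := by
    intro k
    obtain ⟨u, hu, hu1⟩ := hpair k
    refine ⟨(u + 1) / 4, ⟨u + 1, hu1, ?_⟩, ⟨u, hu, ?_⟩⟩
    · simp only [h0]
    · simp only [h1]
  refine ⟨hsub, h0F, h2F, by rw [hhull, interior_Icc], hinter, ?_⟩
  intro k hfeas
  have hd := hfeas.2.2.2 0 1 (by decide)
  exact (hinter k).not_subset_empty (hd.inter_eq ▸ subset_rfl)
end

section
/- Let Φ be an IFS on ℝ satisfying the open set condition whose self-similar set F has Minkowski dimension equal to 1. Then F is Minkowski measurable; that is, λ(F_ε) converges to a positive finite limit as ε → 0+. -/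
open Set Filter MeasureTheory Metric Topology

section Aux

open Metric MeasureTheory ENNReal

namespace IFSAux

variable {N : ℕ}

lemma mem_cthick_iff {δ : ℝ} (hδ : 0 ≤ δ) {s : Set ℝ} (hs : s.Nonempty) {x : ℝ} :
    x ∈ cthickening δ s ↔ infDist x s ≤ δ := by
  rw [Metric.mem_cthickening_iff,
    ENNReal.le_ofReal_iff_toReal_le (Metric.infEdist_ne_top hs) hδ]
  rfl

/-- Every map in the IFS is affine: `φ i x = c * x + b` with `|c| = r i`. -/
lemma affine_form (Φ : IFS N) (i : Fin N) :
    ∃ c b : ℝ, |c| = Φ.r i ∧ ∀ x, Φ.φ i x = c * x + b := by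
  have hrpos := Φ.r_pos i
  have hrne : Φ.r i ≠ 0 := ne_of_gt hrpos
  have habs : ∀ x, |(Φ.φ i x - Φ.φ i 0) / Φ.r i| = |x| := by
    intro x
    rw [abs_div, abs_of_pos hrpos, Φ.similar i x 0, sub_zero, mul_comm,
      mul_div_assoc, div_self hrne, mul_one]
  have hdist : ∀ x y,
      |(Φ.φ i x - Φ.φ i 0) / Φ.r i - (Φ.φ i y - Φ.φ i 0) / Φ.r i| = |x - y| := by
    intro x y
    rw [div_sub_div_same, sub_sub_sub_cancel_right, abs_div, abs_of_pos hrpos,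
      Φ.similar i x y, mul_comm, mul_div_assoc, div_self hrne, mul_one]
  set g : ℝ → ℝ := fun x => (Φ.φ i x - Φ.φ i 0) / Φ.r i with hgdef
  have hgx : ∀ x, g x = (Φ.φ i x - Φ.φ i 0) / Φ.r i := fun x => by rw [hgdef]
  clear_value g
  have habs' : ∀ x, |g x| = |x| := fun x => by rw [hgx]; exact habs x
  have hdist' : ∀ x y, |g x - g y| = |x - y| := fun x y => by
    rw [hgx, hgx]; exact hdist x y
  have hmul : ∀ x y, g x * g y = x * y := by
    intro x y
    have e1 : (g x - g y) ^ 2 = (x - y) ^ 2 := by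
      rw [← sq_abs (g x - g y), hdist', sq_abs]
    have e2 : (g x) ^ 2 = x ^ 2 := by rw [← sq_abs (g x), habs', sq_abs]
    have e3 : (g y) ^ 2 = y ^ 2 := by rw [← sq_abs (g y), habs', sq_abs]
    nlinarith [e1, e2, e3]
  have h1sq : g 1 * g 1 = 1 := by simpa using hmul 1 1
  have hglin : ∀ x, g x = g 1 * x := by
    intro x
    have h2 : g x * g 1 = x := by simpa using hmul x 1
    linear_combination g 1 * h2 - g x * h1sq
  refine ⟨Φ.r i * g 1, Φ.φ i 0, ?_, ?_⟩
  · have h1 : |g 1| = 1 := by rw [habs' 1, abs_one]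
    rw [abs_mul, h1, mul_one, abs_of_pos hrpos]
  · intro x
    have hx2 : Φ.r i * g x = Φ.φ i x - Φ.φ i 0 := by
      rw [hgx]; field_simp
    have := hglin x
    nlinarith [hx2, this]

lemma c_ne_zero {c : ℝ} {r : ℝ} (hc : |c| = r) (hr : 0 < r) : c ≠ 0 := by
  intro h; rw [h, abs_zero] at hc; exact absurd hc.symm (ne_of_gt hr)

lemma image_affine (c b : ℝ) (hc : c ≠ 0) (A : Set ℝ) :
    (fun x => c * x + b) '' A = (fun y => (y - b) / c) ⁻¹' A := by
  ext x
  constructor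
  · rintro ⟨a, ha, rfl⟩
    show (c * a + b - b) / c ∈ A
    rw [add_sub_cancel_right, mul_comm, mul_div_cancel_right₀ _ hc]
    exact ha
  · intro hx
    exact ⟨(x - b) / c, hx, by field_simp; ring⟩

/-- Scaling of Lebesgue measure under the affine maps of the IFS. -/
lemma vol_image (Φ : IFS N) (i : Fin N) (A : Set ℝ) :
    volume (Φ.φ i '' A) = ENNReal.ofReal (Φ.r i) * volume A := by
  obtain ⟨c, b, hc, hφ⟩ := affine_form Φ i
  have hcne : c ≠ 0 := c_ne_zero hc (Φ.r_pos i)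
  have hc1 : c ≠ 1 := by
    intro h; rw [h, abs_one] at hc; linarith [Φ.r_lt_one i, hc]
  have hc1' : 1 - c ≠ 0 := sub_ne_zero.2 (Ne.symm hc1)
  have himg : Φ.φ i '' A = AffineMap.homothety (b / (1 - c)) c '' A := by
    apply Set.image_congr'
    intro x
    rw [hφ, AffineMap.homothety_apply]
    simp only [smul_eq_mul, vsub_eq_sub, vadd_eq_add]
    field_simp
    ring
  rw [himg, MeasureTheory.Measure.addHaar_image_homothety]
  congr 1
  rw [Module.finrank_self, pow_one, hc]

lemma isOpen_image (Φ : IFS N) (i : Fin N) {A : Set ℝ} (hA : IsOpen A) :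
    IsOpen (Φ.φ i '' A) := by
  obtain ⟨c, b, hc, hφ⟩ := affine_form Φ i
  have hcne : c ≠ 0 := c_ne_zero hc (Φ.r_pos i)
  have : Φ.φ i '' A = (fun y => (y - b) / c) ⁻¹' A := by
    rw [show Φ.φ i = fun x => c * x + b from funext hφ]
    exact image_affine c b hcne A
  rw [this]
  exact hA.preimage (by fun_prop)

/-- Key covering inclusion for thickenings of the attractor. -/
lemma thick_subset (Φ : IFS N) (F : Set ℝ) (hne : F.Nonempty) (hcomp : IsCompact F)
    (hmap : Φ.map F = F) {ε : ℝ} (hε : 0 < ε) :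
    cthickening ε F ⊆ ⋃ i, Φ.φ i '' cthickening (ε / Φ.r i) F := by
  intro x hx
  have hxd : infDist x F ≤ ε := (mem_cthick_iff hε.le hne).1 hx
  obtain ⟨y, hyF, hyd⟩ := hcomp.exists_infDist_eq_dist hne x
  have hyF' : y ∈ Φ.map F := by rw [hmap]; exact hyF
  obtain ⟨i, hi⟩ := Set.mem_iUnion.1 hyF'
  obtain ⟨z, hzF, hzy⟩ := hi
  obtain ⟨c, b, hc, hφ⟩ := affine_form Φ i
  have hrpos := Φ.r_pos i
  have hcne : c ≠ 0 := c_ne_zero hc hrpos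
  refine Set.mem_iUnion.2 ⟨i, (x - b) / c, ?_, ?_⟩
  · have hz : z = (y - b) / c := by
      have : c * z + b = y := by rw [← hφ]; exact hzy
      field_simp [← this]
      linear_combination this
    have hd : dist ((x - b) / c) z ≤ ε / Φ.r i := by
      rw [hz, Real.dist_eq]
      have : (x - b) / c - (y - b) / c = (x - y) / c := by ring
      rw [this, abs_div, hc]
      have hxy : |x - y| ≤ ε := by rw [← Real.dist_eq, ← hyd]; exact hxd
      gcongr
    exact mem_cthickening_of_dist_le _ z _ F hzF hd
  · rw [hφ]; field_simp; ring

/-- The basic scaling inequality `λ(F_{ρε}) ≤ θ · λ(F_ε)` where `θ = ∑ r i` and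
`ρ = min r i`. -/
lemma vol_scale (Φ : IFS N) (F : Set ℝ) (hne : F.Nonempty) (hcomp : IsCompact F)
    (hmap : Φ.map F = F) {ρ ε : ℝ} (hρpos : 0 < ρ) (hρle : ∀ i, ρ ≤ Φ.r i)
    (hε : 0 < ε) :
    volume (cthickening (ρ * ε) F) ≤
      ENNReal.ofReal (∑ i, Φ.r i) * volume (cthickening ε F) := by
  calc volume (cthickening (ρ * ε) F)
      ≤ volume (⋃ i, Φ.φ i '' cthickening (ρ * ε / Φ.r i) F) :=
        measure_mono (thick_subset Φ F hne hcomp hmap (by positivity))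
    _ ≤ ∑ i, volume (Φ.φ i '' cthickening (ρ * ε / Φ.r i) F) :=
        measure_iUnion_fintype_le _ _
    _ ≤ ∑ i, volume (Φ.φ i '' cthickening ε F) := by
        refine Finset.sum_le_sum fun i _ => measure_mono (Set.image_mono ?_)
        apply cthickening_mono
        rw [div_le_iff₀ (Φ.r_pos i)]
        have := hρle i
        nlinarith [Φ.r_pos i]
    _ = ∑ i, ENNReal.ofReal (Φ.r i) * volume (cthickening ε F) := by
        simp_rw [vol_image]
    _ = ENNReal.ofReal (∑ i, Φ.r i) * volume (cthickening ε F) := by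
        rw [← Finset.sum_mul, ← ENNReal.ofReal_sum_of_nonneg fun i _ => (Φ.r_pos i).le]

end IFSAux

end Aux

open scoped ENNReal

/-- A self-similar set in `ℝ` of Minkowski dimension `1`
generated by an IFS satisfying OSC is Minkowski measurable:
`λ(F_ε)` converges to a positive finite limit as `ε → 0+`. -/
theorem full_dimension_minkowski_measurable {N : ℕ} (hN : 2 ≤ N) (Φ : IFS N)
    (F : Set ℝ) (hOSC : Φ.OSC) (hF : Φ.IsAttractor F)
    (hdim : HasMinkowskiDim F 1) :
    ∃ M : ℝ, 0 < M ∧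
      Filter.Tendsto (fun ε : ℝ => (volume (Metric.cthickening ε F)).toReal)
        (𝓝[>] (0:ℝ)) (𝓝 M) := by
  obtain ⟨hne, hcomp, hmap⟩ := hF
  have i0 : Fin N := ⟨0, by omega⟩
  have hunivne : (Finset.univ : Finset (Fin N)).Nonempty := ⟨i0, Finset.mem_univ _⟩
  set θ : ℝ := ∑ i, Φ.r i with hθdef
  have hθpos : 0 < θ := Finset.sum_pos (fun i _ => Φ.r_pos i) hunivne
  -- minimum ratio
  obtain ⟨i₁, -, hρmin⟩ := Finset.exists_min_image Finset.univ Φ.r hunivne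
  set ρ : ℝ := Φ.r i₁ with hρdef
  have hρpos : 0 < ρ := Φ.r_pos i₁
  have hρlt : ρ < 1 := Φ.r_lt_one i₁
  have hρle : ∀ i, ρ ≤ Φ.r i := fun i => hρmin i (Finset.mem_univ i)
  -- finiteness and positivity of thickening volumes
  have hFfin : ∀ ε : ℝ, volume (Metric.cthickening ε F) ≠ ⊤ := fun ε =>
    hcomp.isBounded.cthickening.measure_lt_top.ne
  have hvpos : ∀ ε : ℝ, 0 < ε → 0 < (volume (Metric.cthickening ε F)).toReal := by
    intro ε hε
    obtain ⟨y, hy⟩ := hne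
    have hsub : Metric.closedBall y ε ⊆ Metric.cthickening ε F :=
      Metric.closedBall_subset_cthickening hy ε
    have h1 : (0 : ℝ≥0∞) < volume (Metric.cthickening ε F) := by
      calc (0 : ℝ≥0∞) < ENNReal.ofReal (2 * ε) := ENNReal.ofReal_pos.2 (by linarith)
        _ = volume (Metric.closedBall y ε) := (Real.volume_closedBall y ε).symm
        _ ≤ volume (Metric.cthickening ε F) := measure_mono hsub
    exact ENNReal.toReal_pos h1.ne' (hFfin ε)
  -- Step 1 : 1 ≤ θ
  have hθ1 : 1 ≤ θ := by
    by_contra hlt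
    push_neg at hlt
    set v : ℝ → ℝ := fun ε => (volume (Metric.cthickening ε F)).toReal with hv
    have key : ∀ n : ℕ, v (ρ ^ n) ≤ θ ^ n * v 1 := by
      intro n
      induction n with
      | zero => simp [hv]
      | succ n ih =>
        have h1 : volume (Metric.cthickening (ρ * ρ ^ n) F) ≤
            ENNReal.ofReal θ * volume (Metric.cthickening (ρ ^ n) F) :=
          IFSAux.vol_scale Φ F hne hcomp hmap hρpos hρle (pow_pos hρpos n)
        have h2 : v (ρ ^ (n + 1)) ≤ θ * v (ρ ^ n) := by
          have hfin : ENNReal.ofReal θ * volume (Metric.cthickening (ρ ^ n) F) ≠ ⊤ :=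
            ENNReal.mul_ne_top ENNReal.ofReal_ne_top (hFfin _)
          have := ENNReal.toReal_le_toReal (hFfin (ρ * ρ ^ n)) hfin |>.2 h1
          rw [ENNReal.toReal_mul, ENNReal.toReal_ofReal hθpos.le] at this
          rw [hv]
          simpa [pow_succ, mul_comm] using this
        calc v (ρ ^ (n + 1)) ≤ θ * v (ρ ^ n) := h2
          _ ≤ θ * (θ ^ n * v 1) := by
              exact mul_le_mul_of_nonneg_left ih hθpos.le
          _ = θ ^ (n + 1) * v 1 := by ring
    have hseq : Filter.Tendsto (fun n : ℕ => ρ ^ n) Filter.atTop (𝓝[>] (0 : ℝ)) := by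
      apply tendsto_nhdsWithin_of_tendsto_nhds_of_eventually_within
      · exact tendsto_pow_atTop_nhds_zero_of_lt_one hρpos.le hρlt
      · exact Filter.Eventually.of_forall fun n => pow_pos hρpos n
    have hf : Filter.Tendsto
        (fun n : ℕ => 1 - Real.log (v (ρ ^ n)) / Real.log (ρ ^ n))
        Filter.atTop (𝓝 1) := hdim.comp hseq
    have hlogρ : Real.log ρ < 0 := Real.log_neg hρpos hρlt
    have hlogθ : Real.log θ < 0 := Real.log_neg hθpos hlt
    set L : ℝ := Real.log θ / Real.log ρ with hL
    have hg : Filter.Tendsto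
        (fun n : ℕ => 1 - (L + Real.log (v 1) / Real.log ρ / (n : ℝ)))
        Filter.atTop (𝓝 (1 - (L + 0))) := by
      apply Filter.Tendsto.const_sub
      exact (tendsto_const_div_atTop_nhds_zero_nat _).const_add L
    have hle : ∀ᶠ n : ℕ in Filter.atTop,
        1 - Real.log (v (ρ ^ n)) / Real.log (ρ ^ n) ≤
          1 - (L + Real.log (v 1) / Real.log ρ / (n : ℝ)) := by
      filter_upwards [Filter.eventually_ge_atTop 1] with n hn
      have hn0 : (0 : ℝ) < (n : ℝ) := by exact_mod_cast hn
      have hlog1 : Real.log (v (ρ ^ n)) ≤ (n : ℝ) * Real.log θ + Real.log (v 1) := by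
        calc Real.log (v (ρ ^ n)) ≤ Real.log (θ ^ n * v 1) :=
              Real.log_le_log (hvpos _ (pow_pos hρpos n)) (key n)
          _ = (n : ℝ) * Real.log θ + Real.log (v 1) := by
              rw [Real.log_mul (by positivity) (ne_of_gt (hvpos 1 one_pos)),
                Real.log_pow]
      have hlogpow : Real.log (ρ ^ n) = (n : ℝ) * Real.log ρ := by rw [Real.log_pow]
      rw [hlogpow]
      have hden : (n : ℝ) * Real.log ρ < 0 := mul_neg_of_pos_of_neg hn0 hlogρ
      have h3 : ((n : ℝ) * Real.log θ + Real.log (v 1)) / ((n : ℝ) * Real.log ρ) ≤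
          Real.log (v (ρ ^ n)) / ((n : ℝ) * Real.log ρ) :=
        (div_le_div_right_of_neg hden).2 hlog1
      have h4 : ((n : ℝ) * Real.log θ + Real.log (v 1)) / ((n : ℝ) * Real.log ρ) =
          L + Real.log (v 1) / Real.log ρ / (n : ℝ) := by
        have hnne : (n : ℝ) ≠ 0 := hn0.ne'
        rw [hL]
        field_simp [hnne, hlogρ.ne]
        try ring
      rw [h4] at h3
      linarith
    have hfinal : (1 : ℝ) ≤ 1 - (L + 0) := le_of_tendsto_of_tendsto hf hg hle
    have hLpos : 0 < L := div_pos_iff.2 (Or.inr ⟨hlogθ, hlogρ⟩)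
    linarith
  -- Step 2 : a bounded feasible open set, and θ ≤ 1
  obtain ⟨O, hOne, hOopen, hOsub, hOdisj⟩ := hOSC
  obtain ⟨p, hp⟩ := hOne
  obtain ⟨i₂, -, hrmaxle⟩ := Finset.exists_max_image Finset.univ Φ.r hunivne
  set rmx : ℝ := Φ.r i₂ with hrmx
  have hrmx0 : 0 < rmx := Φ.r_pos i₂
  have hrmx1 : rmx < 1 := Φ.r_lt_one i₂
  have hrle : ∀ i, Φ.r i ≤ rmx := fun i => hrmaxle i (Finset.mem_univ i)
  obtain ⟨i₃, -, hMle⟩ := Finset.exists_max_image Finset.univ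
    (fun i => dist (Φ.φ i p) p) hunivne
  set Mb : ℝ := dist (Φ.φ i₃ p) p with hMb
  have hMb0 : 0 ≤ Mb := dist_nonneg
  have hMble : ∀ i, dist (Φ.φ i p) p ≤ Mb := fun i => hMle i (Finset.mem_univ i)
  set R : ℝ := Mb / (1 - rmx) + 1 with hR
  have hrmxne : (1 : ℝ) - rmx ≠ 0 := ne_of_gt (by linarith)
  have hR0 : 0 < R := by
    rw [hR]
    have h := div_nonneg hMb0 (by linarith : (0:ℝ) ≤ 1 - rmx)
    linarith
  set O' : Set ℝ := O ∩ Metric.ball p R with hO'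
  have hO'open : IsOpen O' := hOopen.inter Metric.isOpen_ball
  have hpO' : p ∈ O' := ⟨hp, Metric.mem_ball_self hR0⟩
  have hRkey : (1 - rmx) * R = Mb + (1 - rmx) := by
    rw [hR]
    field_simp
  have hinv : ∀ i, Φ.φ i '' O' ⊆ O' := by
    rintro i x ⟨a, ⟨haO, hab⟩, rfl⟩
    refine ⟨hOsub i ⟨a, haO, rfl⟩, ?_⟩
    rw [Metric.mem_ball]
    have h1 : dist (Φ.φ i a) (Φ.φ i p) = Φ.r i * dist a p := by
      rw [Real.dist_eq, Real.dist_eq, Φ.similar]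
    have h2 : dist a p < R := Metric.mem_ball.1 hab
    calc dist (Φ.φ i a) p ≤ dist (Φ.φ i a) (Φ.φ i p) + dist (Φ.φ i p) p :=
          dist_triangle _ _ _
      _ ≤ rmx * R + Mb := by
          rw [h1]
          exact add_le_add
            (mul_le_mul (hrle i) h2.le dist_nonneg hrmx0.le) (hMble i)
      _ < R := by nlinarith [hRkey, hrmx1]
  have hO'pos : (0 : ℝ≥0∞) < volume O' := hO'open.measure_pos volume ⟨p, hpO'⟩
  have hO'fin : volume O' ≠ ⊤ := by
    have : volume O' ≤ volume (Metric.ball p R) :=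
      measure_mono Set.inter_subset_right
    exact (this.trans_lt measure_ball_lt_top).ne
  -- exact measure of the image of a subset of O'
  have hsum : ∀ A : Set ℝ, IsOpen A → A ⊆ O' →
      volume (Φ.map A) = ENNReal.ofReal θ * volume A := by
    intro A hA hAsub
    rw [IFS.map, measure_iUnion ?_ fun i => (IFSAux.isOpen_image Φ i hA).measurableSet]
    · rw [tsum_fintype]
      simp_rw [IFSAux.vol_image]
      rw [← Finset.sum_mul, ← ENNReal.ofReal_sum_of_nonneg fun i _ => (Φ.r_pos i).le]
    · intro i j hij
      have hAO : A ⊆ O := hAsub.trans Set.inter_subset_left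
      exact (hOdisj i j hij).mono (Set.image_mono hAO) (Set.image_mono hAO)
  have hθle1 : θ ≤ 1 := by
    have h1 : ENNReal.ofReal θ * volume O' ≤ 1 * volume O' := by
      rw [one_mul, ← hsum O' hO'open subset_rfl]
      exact measure_mono (Set.iUnion_subset hinv)
    have h2 : ENNReal.ofReal θ ≤ 1 :=
      (ENNReal.mul_le_mul_iff_left hO'pos.ne' hO'fin).1 h1
    exact (ENNReal.ofReal_le_one).1 h2
  have hθeq : θ = 1 := le_antisymm hθle1 hθ1
  -- Step 3 : iterates of O' keep full measure and converge to F
  set A : ℕ → Set ℝ := fun n => (Φ.map)^[n] O' with hA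
  have hAsucc : ∀ n, A (n + 1) = Φ.map (A n) := by
    intro n
    rw [hA]
    simp [Function.iterate_succ_apply']
  have hAzero : A 0 = O' := rfl
  have hAprop : ∀ n, IsOpen (A n) ∧ A n ⊆ O' ∧ volume (A n) = volume O' := by
    intro n
    induction n with
    | zero => exact ⟨hO'open, subset_rfl, rfl⟩
    | succ n ih =>
      obtain ⟨hop, hsub, hvol⟩ := ih
      refine ⟨?_, ?_, ?_⟩
      · rw [hAsucc, IFS.map]
        exact isOpen_iUnion fun i => IFSAux.isOpen_image Φ i hop
      · rw [hAsucc, IFS.map]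
        exact Set.iUnion_subset fun i => (Set.image_mono hsub).trans (hinv i)
      · rw [hAsucc, hsum _ hop hsub, hvol, hθeq]
        simp
  -- distance of points of A n to F
  obtain ⟨y₀, hy₀⟩ := id hne
  set D : ℝ := R + dist p y₀ + 1 with hD
  have hD0 : 0 < D := by positivity
  have hbase : ∀ x ∈ O', Metric.infDist x F ≤ D := by
    intro x hx
    have h2 : dist x p < R := Metric.mem_ball.1 hx.2
    calc Metric.infDist x F ≤ dist x y₀ := Metric.infDist_le_dist_of_mem hy₀
      _ ≤ dist x p + dist p y₀ := dist_triangle _ _ _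
      _ ≤ D := by rw [hD]; linarith
  have hdist : ∀ n, ∀ x ∈ A n, Metric.infDist x F ≤ rmx ^ n * D := by
    intro n
    induction n with
    | zero => simpa [hAzero] using hbase
    | succ n ih =>
      intro x hx
      rw [hAsucc, IFS.map] at hx
      obtain ⟨i, hi⟩ := Set.mem_iUnion.1 hx
      obtain ⟨a, haA, rfl⟩ := hi
      have ha' : Metric.infDist a F ≤ rmx ^ n * D := ih a haA
      obtain ⟨y, hyF, hyd⟩ := hcomp.exists_infDist_eq_dist hne a
      have hφy : Φ.φ i y ∈ F := by
        rw [← hmap]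
        exact Set.mem_iUnion.2 ⟨i, y, hyF, rfl⟩
      have hday : dist a y ≤ rmx ^ n * D := by rw [← hyd]; exact ha'
      calc Metric.infDist (Φ.φ i a) F ≤ dist (Φ.φ i a) (Φ.φ i y) :=
            Metric.infDist_le_dist_of_mem hφy
        _ = Φ.r i * dist a y := by rw [Real.dist_eq, Real.dist_eq, Φ.similar]
        _ ≤ rmx * (rmx ^ n * D) := by
            have := Φ.r_pos i
            gcongr
            exact hrle i
        _ = rmx ^ (n + 1) * D := by ring
  -- F has positive volume
  have hsubε : ∀ ε : ℝ, 0 < ε → volume O' ≤ volume (Metric.cthickening ε F) := by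
    intro ε hε
    obtain ⟨n, hn⟩ : ∃ n : ℕ, rmx ^ n * D ≤ ε := by
      obtain ⟨n, hn⟩ := exists_pow_lt_of_lt_one (x := ε / D) (by positivity) hrmx1
      exact ⟨n, by rw [← le_div_iff₀ hD0]; exact hn.le⟩
    calc volume O' = volume (A n) := ((hAprop n).2.2).symm
      _ ≤ volume (Metric.cthickening ε F) := by
          apply measure_mono
          intro x hx
          rw [IFSAux.mem_cthick_iff hε.le hne]
          exact (hdist n x hx).trans hn
  have hT : Filter.Tendsto (fun ε : ℝ => volume (Metric.cthickening ε F)) (𝓝 0)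
      (𝓝 (volume F)) := tendsto_measure_cthickening_of_isCompact hcomp
  have hT' : Filter.Tendsto (fun ε : ℝ => volume (Metric.cthickening ε F))
      (𝓝[>] (0 : ℝ)) (𝓝 (volume F)) := hT.mono_left nhdsWithin_le_nhds
  have hFpos : 0 < volume F := by
    refine lt_of_lt_of_le hO'pos (ge_of_tendsto hT' ?_)
    filter_upwards [self_mem_nhdsWithin] with ε hε
    exact hsubε ε hε
  have hFfin' : volume F ≠ ⊤ := hcomp.isBounded.measure_lt_top.ne
  refine ⟨(volume F).toReal, ENNReal.toReal_pos hFpos.ne' hFfin', ?_⟩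
  exact (ENNReal.tendsto_toReal hFfin').comp hT'
end
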